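/- arXiv:0707.2333 — 2 statements merged into one kernel-verified Lean document; each statement's English description precedes it below -/
import Mathlib

section
/- Let s(n), t(n) ≤ C·n, let ~_n be an equivalence relation on I_{s(n)} × I_{t(n)} satisfying: (MP2) for all (p,q) and p', #{q' : (p,q) ~_n (p',q')} ≤ B, and symmetrically for rows. Then for any partition p of {1,...,2k}, the number of pairs (φ, ψ), with φ : {1,...,2k} → I_{s(n)} constant on blocks of m and ψ : {1,...,2k} → I_{t(n)} constant on blocks of n, such that (φ(i),ψ(i)) ~_n (φ(j),ψ(j)) whenever i ~_p j, is at most O(n^{|p|+1}) (with constant depending on k, B, C only). -/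
/-- A partition (as a setoid) of `Fin N` is a pair partition if every block has two elements. -/
def IsPairPartition {N : ℕ} (p : Setoid (Fin N)) : Prop :=
  ∀ c ∈ p.classes, c.ncard = 2

/-- A partition of `Fin N` is noncrossing if there are no `p1 < q1 < p2 < q2` with
`p1 ~ p2`, `q1 ~ q2` but `p1 ≁ q1`. -/
def IsNoncrossing {N : ℕ} (p : Setoid (Fin N)) : Prop :=
  ¬ ∃ p1 q1 p2 q2 : Fin N, p1 < q1 ∧ q1 < p2 ∧ p2 < q2 ∧
      p.r p1 p2 ∧ p.r q1 q2 ∧ ¬ p.r p1 q1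

/-- The pair partition `{{1,2},{3,4},…,{2k-1,2k}}` (0-indexed: `{0,1},{2,3},…`). -/
def mSetoid (k : ℕ) : Setoid (Fin (2 * k)) :=
  Setoid.ker (fun i => i.val / 2)

/-- The cyclic pair partition `{{2,3},{4,5},…,{2k,1}}` (0-indexed: `{1,2},{3,4},…,{2k-1,0}`). -/
def nSetoid (k : ℕ) : Setoid (Fin (2 * k)) :=
  Setoid.ker (fun i => ((i.val + 1) / 2) % k)



section aux
variable {N : ℕ}

open Classical in
/-- Least element of the `p`-class of `i`. -/
noncomputable def srep (p : Setoid (Fin N)) (i : Fin N) : Fin N :=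
  (Finset.univ.filter fun j => p.r j i).min' ⟨i, by simp [p.refl' i]⟩

open Classical in
lemma srep_rel (p : Setoid (Fin N)) (i : Fin N) : p.r (srep p i) i := by
  have h := Finset.min'_mem (Finset.univ.filter fun j => p.r j i) ⟨i, by simp [p.refl' i]⟩
  simp only [Finset.mem_filter, Finset.mem_univ, true_and] at h
  exact h

open Classical in
lemma srep_le (p : Setoid (Fin N)) (i : Fin N) : srep p i ≤ i :=
  Finset.min'_le _ _ (by simp [p.refl' i])

open Classical in
lemma srep_eq_of_rel (p : Setoid (Fin N)) {i j : Fin N} (h : p.r i j) :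
    srep p i = srep p j := by
  apply le_antisymm
  · apply Finset.min'_le
    simp only [Finset.mem_filter, Finset.mem_univ, true_and]
    exact p.trans' (srep_rel p j) (p.symm' h)
  · apply Finset.min'_le
    simp only [Finset.mem_filter, Finset.mem_univ, true_and]
    exact p.trans' (srep_rel p i) h

lemma srep_srep (p : Setoid (Fin N)) (i : Fin N) : srep p (srep p i) = srep p i :=
  srep_eq_of_rel p (srep_rel p i)

lemma classes_ncard_eq (p : Setoid (Fin N)) :
    p.classes.ncard = (Finset.univ.filter fun i => srep p i = i).card := by
  have himg : p.classes = (fun i => {x | p.r x i}) '' {i : Fin N | srep p i = i} := by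
    ext c
    constructor
    · rintro ⟨y, rfl⟩
      refine ⟨srep p y, srep_srep p y, ?_⟩
      ext x
      simp only [Set.mem_setOf_eq]
      constructor
      · intro h
        exact p.trans' h (srep_rel p y)
      · intro h
        exact p.trans' h (p.symm' (srep_rel p y))
    · rintro ⟨i, _, rfl⟩
      exact ⟨i, rfl⟩
  rw [himg, Set.ncard_image_of_injOn]
  · rw [← Set.ncard_coe_finset]
    congr 1
    ext i
    simp
  · intro i hi j hj hij
    have hrij : p.r i j := by
      have h1 : i ∈ {x | p.r x i} := p.refl' i
      have h2 : i ∈ {x | p.r x j} := by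
        have := congrArg (i ∈ ·) hij
        simp only [Set.mem_setOf_eq] at this ⊢
        exact this.mp h1
      exact h2
    rw [← hi, ← hj]
    exact srep_eq_of_rel p hrij

end aux

section rank
variable {α : Type*} [LinearOrder α]

/-- Number of elements of `A` below `x`. -/
noncomputable def srank (A : Set α) (x : α) : ℕ := {y ∈ A | y < x}.ncard

lemma srank_lt {A : Set α} (hA : A.Finite) {x : α} (hx : x ∈ A) :
    srank A x < A.ncard := by
  apply Set.ncard_lt_ncard _ hA
  rw [Set.ssubset_def]
  refine ⟨fun y hy => hy.1, fun hsub => absurd (hsub hx).2 (lt_irrefl x)⟩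

lemma srank_strictMono {A : Set α} (hA : A.Finite) {x y : α} (hx : x ∈ A) (hxy : x < y) :
    srank A x < srank A y := by
  apply Set.ncard_lt_ncard _ (hA.subset (Set.sep_subset _ _))
  rw [Set.ssubset_def]
  constructor
  · intro z hz; exact ⟨hz.1, hz.2.trans hxy⟩
  · intro hsub; exact absurd (hsub ⟨hx, hxy⟩).2 (lt_irrefl x)

lemma srank_injOn {A : Set α} (hA : A.Finite) : Set.InjOn (srank A) A := by
  intro x hx y hy h
  rcases lt_trichotomy x y with hlt | he | hlt
  · exact absurd h (Nat.ne_of_lt (srank_strictMono hA hx hlt))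
  · exact he
  · exact absurd h.symm (Nat.ne_of_lt (srank_strictMono hA hy hlt))

end rank

section encoding

variable {k B sn tn : ℕ}

/-- Size of the set of possible codes at step `i`. -/
noncomputable def bnd (k B : ℕ) (p : Setoid (Fin (2 * k))) (sn tn : ℕ) (i : Fin (2 * k)) : ℕ :=
  if i.val = 0 then sn * tn
  else if srep p i = i then (if i.val % 2 = 1 then tn else sn)
  else B + 1

/-- The encoding of a pair of functions as a code sequence. -/
noncomputable def enc (k B : ℕ) (p : Setoid (Fin (2 * k))) {sn tn : ℕ}
    (Rn : Setoid (Fin sn × Fin tn))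
    (fp : (Fin (2 * k) → Fin sn) × (Fin (2 * k) → Fin tn)) (i : Fin (2 * k)) :
    Fin (bnd k B p sn tn i) :=
  if h0 : i.val = 0 then
    ⟨(fp.1 i).val * tn + (fp.2 i).val, by
      simp only [bnd, if_pos h0]
      have h1 : (fp.1 i).val + 1 ≤ sn := (fp.1 i).isLt
      calc (fp.1 i).val * tn + (fp.2 i).val
          < (fp.1 i).val * tn + tn := Nat.add_lt_add_left (fp.2 i).isLt _
        _ = ((fp.1 i).val + 1) * tn := by ring
        _ ≤ sn * tn := Nat.mul_le_mul h1 le_rfl⟩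
  else if hl : srep p i = i then
    if hodd : i.val % 2 = 1 then
      ⟨(fp.2 i).val, by simp only [bnd, if_neg h0, if_pos hl, if_pos hodd]; exact (fp.2 i).isLt⟩
    else
      ⟨(fp.1 i).val, by simp only [bnd, if_neg h0, if_pos hl, if_neg hodd]; exact (fp.1 i).isLt⟩
  else
    if hodd : i.val % 2 = 1 then
      ⟨min (srank {q' | Rn.r (fp.1 (srep p i), fp.2 (srep p i)) (fp.1 i, q')} (fp.2 i)) B, by
        simp only [bnd, if_neg h0, if_neg hl]
        exact Nat.lt_succ_of_le (Nat.min_le_right _ _)⟩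
    else
      ⟨min (srank {a' | Rn.r (fp.1 (srep p i), fp.2 (srep p i)) (a', fp.2 i)} (fp.1 i)) B, by
        simp only [bnd, if_neg h0, if_neg hl]
        exact Nat.lt_succ_of_le (Nat.min_le_right _ _)⟩

end encoding

section inj

lemma enc_inj {k B sn tn : ℕ} (p : Setoid (Fin (2 * k)))
    (Rn : Setoid (Fin sn × Fin tn))
    (hB1 : ∀ (a : Fin sn) (q : Fin tn) (a' : Fin sn),
      {q' : Fin tn | Rn.r (a, q) (a', q')}.ncard ≤ B)
    (hB2 : ∀ (a : Fin sn) (q q' : Fin tn),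
      {a' : Fin sn | Rn.r (a, q) (a', q')}.ncard ≤ B)
    {v w : (Fin (2 * k) → Fin sn) × (Fin (2 * k) → Fin tn)}
    (hvm : ∀ i j, (mSetoid k).r i j → v.1 i = v.1 j)
    (hvn : ∀ i j, (nSetoid k).r i j → v.2 i = v.2 j)
    (hvR : ∀ i j, p.r i j → Rn.r (v.1 i, v.2 i) (v.1 j, v.2 j))
    (hwm : ∀ i j, (mSetoid k).r i j → w.1 i = w.1 j)
    (hwn : ∀ i j, (nSetoid k).r i j → w.2 i = w.2 j)
    (hwR : ∀ i j, p.r i j → Rn.r (w.1 i, w.2 i) (w.1 j, w.2 j))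
    (h : enc k B p Rn v = enc k B p Rn w) : v = w := by
  have key : ∀ m : ℕ, ∀ i : Fin (2 * k), i.val ≤ m → v.1 i = w.1 i ∧ v.2 i = w.2 i := by
    intro m
    induction m with
    | zero =>
      intro i hi
      have h0i : i.val = 0 := Nat.le_zero.mp hi
      have h0c := congrFun h i
      simp only [enc, dif_pos h0i, Fin.mk.injEq] at h0c
      have e1 : (v.1 i).val = (w.1 i).val := by
        rcases Nat.lt_trichotomy (v.1 i).val (w.1 i).val with h' | h' | h'
        · exfalso
          have h1 := Nat.mul_le_mul (Nat.succ_le_of_lt h') (le_refl tn)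
          rw [Nat.succ_mul] at h1
          have h2 := (v.2 i).isLt
          have h3 := (w.2 i).isLt
          linarith
        · exact h'
        · exfalso
          have h1 := Nat.mul_le_mul (Nat.succ_le_of_lt h') (le_refl tn)
          rw [Nat.succ_mul] at h1
          have h2 := (v.2 i).isLt
          have h3 := (w.2 i).isLt
          linarith
      rw [e1] at h0c
      exact ⟨Fin.ext e1, Fin.ext (Nat.add_left_cancel h0c)⟩
    | succ m IH =>
      intro i hi
      rcases Nat.lt_or_ge i.val (m + 1) with h' | h'
      · exact IH i (by omega)
      · have hival : i.val = m + 1 := by omega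
        have hne0 : ¬ i.val = 0 := by omega
        have hjlt : m < 2 * k := by omega
        set j : Fin (2 * k) := ⟨m, hjlt⟩ with hj
        have h0c := congrFun h i
        rcases Nat.mod_two_eq_zero_or_one i.val with hpar | hpar
        · -- i even, shared coordinate is ψ via nSetoid
          have heq : (i.val + 1) / 2 = (j.val + 1) / 2 := by
            show (i.val + 1) / 2 = (m + 1) / 2
            omega
          have hn_rel : (nSetoid k).r i j :=
            show ((i.val + 1) / 2) % k = ((j.val + 1) / 2) % k by rw [heq]
          have hψ : v.2 i = w.2 i := by
            rw [hvn i j hn_rel, hwn i j hn_rel]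
            exact (IH j (Nat.le_refl m)).2
          have hnodd : ¬ i.val % 2 = 1 := by omega
          by_cases hl : srep p i = i
          · simp only [enc, dif_neg hne0, dif_pos hl, dif_neg hnodd, Fin.mk.injEq] at h0c
            exact ⟨Fin.ext h0c, hψ⟩
          · set j0 : Fin (2 * k) := srep p i with hj0
            have hj0lt : j0.val < i.val := by
              have hle : j0 ≤ i := srep_le p i
              have hne : j0 ≠ i := hl
              exact lt_of_le_of_ne hle fun hc => hne (Fin.ext hc)
            have hIH0 := IH j0 (by omega)
            have hmem_v : v.1 i ∈ {a' | Rn.r (v.1 j0, v.2 j0) (a', v.2 i)} :=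
              hvR j0 i (srep_rel p i)
            have hmem_w : w.1 i ∈ {a' | Rn.r (v.1 j0, v.2 j0) (a', v.2 i)} := by
              have hh := hwR j0 i (srep_rel p i)
              rw [← hIH0.1, ← hIH0.2, ← hψ] at hh
              exact hh
            have hfin : {a' | Rn.r (v.1 j0, v.2 j0) (a', v.2 i)}.Finite := Set.toFinite _
            have hcardA := hB2 (v.1 j0) (v.2 j0) (v.2 i)
            simp only [enc, dif_neg hne0, dif_neg hl, dif_neg hnodd, Fin.mk.injEq] at h0c
            simp only [dif_neg (show ¬ srep p i = i from hl), Fin.mk.injEq] at h0c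
            rw [← hj0] at h0c
            have hAeq : {a' | Rn.r (w.1 j0, w.2 j0) (a', w.2 i)}
                = {a' | Rn.r (v.1 j0, v.2 j0) (a', v.2 i)} := by
              rw [hIH0.1, hIH0.2, hψ]
            rw [hAeq] at h0c
            have h1 : srank {a' | Rn.r (v.1 j0, v.2 j0) (a', v.2 i)} (v.1 i) ≤ B :=
              le_of_lt (lt_of_lt_of_le (srank_lt hfin hmem_v) hcardA)
            have h2 : srank {a' | Rn.r (v.1 j0, v.2 j0) (a', v.2 i)} (w.1 i) ≤ B :=
              le_of_lt (lt_of_lt_of_le (srank_lt hfin hmem_w) hcardA)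
            rw [min_eq_left h1, min_eq_left h2] at h0c
            exact ⟨srank_injOn hfin hmem_v hmem_w h0c, hψ⟩
        · -- i odd, shared coordinate is φ via mSetoid
          have hm_rel : (mSetoid k).r i j :=
            show i.val / 2 = m / 2 by omega
          have hφ : v.1 i = w.1 i := by
            rw [hvm i j hm_rel, hwm i j hm_rel]
            exact (IH j (Nat.le_refl m)).1
          by_cases hl : srep p i = i
          · simp only [enc, dif_neg hne0, dif_pos hl, dif_pos hpar, Fin.mk.injEq] at h0c
            exact ⟨hφ, Fin.ext h0c⟩
          · set j0 : Fin (2 * k) := srep p i with hj0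
            have hj0lt : j0.val < i.val := by
              have hle : j0 ≤ i := srep_le p i
              have hne : j0 ≠ i := hl
              exact lt_of_le_of_ne hle fun hc => hne (Fin.ext hc)
            have hIH0 := IH j0 (by omega)
            have hmem_v : v.2 i ∈ {q' | Rn.r (v.1 j0, v.2 j0) (v.1 i, q')} :=
              hvR j0 i (srep_rel p i)
            have hmem_w : w.2 i ∈ {q' | Rn.r (v.1 j0, v.2 j0) (v.1 i, q')} := by
              have hh := hwR j0 i (srep_rel p i)
              rw [← hIH0.1, ← hIH0.2, ← hφ] at hh
              exact hh
            have hfin : {q' | Rn.r (v.1 j0, v.2 j0) (v.1 i, q')}.Finite := Set.toFinite _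
            have hcardA := hB1 (v.1 j0) (v.2 j0) (v.1 i)
            simp only [enc, dif_neg hne0, dif_neg hl, dif_pos hpar, Fin.mk.injEq] at h0c
            simp only [dif_neg (show ¬ srep p i = i from hl), Fin.mk.injEq] at h0c
            rw [← hj0] at h0c
            have hAeq : {q' | Rn.r (w.1 j0, w.2 j0) (w.1 i, q')}
                = {q' | Rn.r (v.1 j0, v.2 j0) (v.1 i, q')} := by
              rw [hIH0.1, hIH0.2, hφ]
            rw [hAeq] at h0c
            have h1 : srank {q' | Rn.r (v.1 j0, v.2 j0) (v.1 i, q')} (v.2 i) ≤ B :=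
              le_of_lt (lt_of_lt_of_le (srank_lt hfin hmem_v) hcardA)
            have h2 : srank {q' | Rn.r (v.1 j0, v.2 j0) (v.1 i, q')} (w.2 i) ≤ B :=
              le_of_lt (lt_of_lt_of_le (srank_lt hfin hmem_w) hcardA)
            rw [min_eq_left h1, min_eq_left h2] at h0c
            exact ⟨hφ, srank_injOn hfin hmem_v hmem_w h0c⟩
  have k1 : v.1 = w.1 := funext fun i => (key (2 * k) i (le_of_lt i.isLt)).1
  have k2 : v.2 = w.2 := funext fun i => (key (2 * k) i (le_of_lt i.isLt)).2
  exact Prod.ext k1 k2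

end inj

/-- Lemma (basic counting bound): under (MP2), for any partition `p` of `{1,…,2k}` the
number of pairs `(φ,ψ)` with `φ` constant on blocks of `m`, `ψ` constant on blocks of
`n`, and `(φ(i),ψ(i)) ~ (φ(j),ψ(j))` whenever `i ~_p j`, is `O(n^{|p|+1})`, with a
constant depending only on `k`, `B`, `C`. -/
theorem count_constrained_pairs_le (k B C : ℕ) (hk : 1 ≤ k) :
    ∃ D : ℕ, ∀ (s t : ℕ → ℕ) (R : ∀ n, Setoid (Fin (s n) × Fin (t n)))
      (p : Setoid (Fin (2 * k))) (n : ℕ),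
      s n ≤ C * n → t n ≤ C * n →
      (∀ (a : Fin (s n)) (q : Fin (t n)) (a' : Fin (s n)),
        {q' : Fin (t n) | (R n).r (a, q) (a', q')}.ncard ≤ B) →
      (∀ (a : Fin (s n)) (q q' : Fin (t n)),
        {a' : Fin (s n) | (R n).r (a, q) (a', q')}.ncard ≤ B) →
      {fp : (Fin (2 * k) → Fin (s n)) × (Fin (2 * k) → Fin (t n)) |
          (∀ i j, (mSetoid k).r i j → fp.1 i = fp.1 j) ∧
          (∀ i j, (nSetoid k).r i j → fp.2 i = fp.2 j) ∧
          (∀ i j, p.r i j → (R n).r (fp.1 i, fp.2 i) (fp.1 j, fp.2 j))}.ncard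
        ≤ D * n ^ (p.classes.ncard + 1) := by
  refine ⟨(C + 1) ^ (2 * k + 1) * (B + 1) ^ (2 * k), ?_⟩
  intro s t R p n hs ht hB1 hB2
  haveI : NeZero (2 * k) := ⟨by omega⟩
  have hinj : Set.InjOn (enc k B p (R n))
      {fp : (Fin (2 * k) → Fin (s n)) × (Fin (2 * k) → Fin (t n)) |
          (∀ i j, (mSetoid k).r i j → fp.1 i = fp.1 j) ∧
          (∀ i j, (nSetoid k).r i j → fp.2 i = fp.2 j) ∧
          (∀ i j, p.r i j → (R n).r (fp.1 i, fp.2 i) (fp.1 j, fp.2 j))} := by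
    intro v hv w hw hvw
    exact enc_inj p (R n) hB1 hB2 hv.1 hv.2.1 hv.2.2 hw.1 hw.2.1 hw.2.2 hvw
  have h1 := Set.ncard_le_ncard_of_injOn (enc k B p (R n))
    (fun a _ => Set.mem_univ (enc k B p (R n) a)) hinj Set.finite_univ
  rw [Set.ncard_univ, Nat.card_eq_fintype_card, Fintype.card_pi] at h1
  simp only [Fintype.card_fin] at h1
  refine le_trans h1 ?_
  -- now bound the product
  set L := Finset.univ.filter (fun i : Fin (2 * k) => srep p i = i) with hLdef
  have h0L : (0 : Fin (2 * k)) ∈ L := by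
    simp only [hLdef, Finset.mem_filter, Finset.mem_univ, true_and]
    have h := srep_le p 0
    rw [Fin.le_def] at h
    apply Fin.ext
    simp only [Fin.val_zero] at h ⊢
    omega
  have hL1 : 1 ≤ L.card := Finset.card_pos.mpr ⟨0, h0L⟩
  have hLle : L.card ≤ 2 * k := le_trans (Finset.card_le_univ L) (by simp)
  have hcls : p.classes.ncard = L.card := classes_ncard_eq p
  have hbnd0 : bnd k B p (s n) (t n) 0 = s n * t n := by
    simp [bnd]
  have hfilter_eq : (Finset.univ.erase (0 : Fin (2 * k))).filter
      (fun i => srep p i = i) = L.erase 0 := by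
    ext i
    simp only [hLdef, Finset.mem_filter, Finset.mem_erase, Finset.mem_univ, true_and, and_true]
    try tauto
  have h2 : ∏ i ∈ Finset.univ.erase (0 : Fin (2 * k)), bnd k B p (s n) (t n) i
      ≤ (C * n) ^ (L.card - 1) * (B + 1) ^ (2 * k) := by
    calc ∏ i ∈ Finset.univ.erase (0 : Fin (2 * k)), bnd k B p (s n) (t n) i
        ≤ ∏ i ∈ Finset.univ.erase (0 : Fin (2 * k)),
            (if srep p i = i then C * n else B + 1) := by
          apply Finset.prod_le_prod'
          intro i hi
          have hne : i ≠ 0 := (Finset.mem_erase.mp hi).1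
          have hne0 : ¬ i.val = 0 := fun h => hne (Fin.ext (h.trans (Fin.val_zero _).symm))
          simp only [bnd, if_neg hne0]
          split_ifs with hsr hodd
          · exact ht
          · exact hs
          · exact le_rfl
      _ = (C * n) ^ ((Finset.univ.erase (0 : Fin (2 * k))).filter
              (fun i => srep p i = i)).card
            * (B + 1) ^ ((Finset.univ.erase (0 : Fin (2 * k))).filter
              (fun i => ¬ srep p i = i)).card := by
          rw [Finset.prod_ite, Finset.prod_const, Finset.prod_const]
      _ ≤ (C * n) ^ (L.card - 1) * (B + 1) ^ (2 * k) := by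
          rw [hfilter_eq, Finset.card_erase_of_mem h0L]
          apply Nat.mul_le_mul_left
          apply Nat.pow_le_pow_right (Nat.succ_le_succ (Nat.zero_le B))
          exact le_trans (Finset.card_le_univ _) (by simp)
  have hC : C ^ (L.card + 1) ≤ (C + 1) ^ (2 * k + 1) :=
    le_trans (Nat.pow_le_pow_left (Nat.le_succ C) _)
      (Nat.pow_le_pow_right (Nat.succ_le_succ (Nat.zero_le C)) (by omega))
  calc ∏ i, bnd k B p (s n) (t n) i
      = bnd k B p (s n) (t n) 0 * ∏ i ∈ Finset.univ.erase 0, bnd k B p (s n) (t n) i :=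
        (Finset.mul_prod_erase _ _ (Finset.mem_univ 0)).symm
    _ ≤ (C * n * (C * n)) * ((C * n) ^ (L.card - 1) * (B + 1) ^ (2 * k)) := by
        rw [hbnd0]
        exact Nat.mul_le_mul (Nat.mul_le_mul hs ht) h2
    _ = (C * n) ^ (L.card - 1 + 2) * (B + 1) ^ (2 * k) := by ring
    _ = (C * n) ^ (L.card + 1) * (B + 1) ^ (2 * k) := by
        congr 2
        omega
    _ = C ^ (L.card + 1) * n ^ (L.card + 1) * (B + 1) ^ (2 * k) := by rw [mul_pow]
    _ ≤ (C + 1) ^ (2 * k + 1) * n ^ (L.card + 1) * (B + 1) ^ (2 * k) := by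
        exact Nat.mul_le_mul (Nat.mul_le_mul hC le_rfl) le_rfl
    _ = (C + 1) ^ (2 * k + 1) * (B + 1) ^ (2 * k) * n ^ (L.card + 1) := by ring
    _ = (C + 1) ^ (2 * k + 1) * (B + 1) ^ (2 * k) * n ^ (p.classes.ncard + 1) := by
        rw [hcls]
end

section
/- Under the hypotheses (MP1),(MP2),(MP3) on the equivalence relations ~_n on I_{s(n)} × I_{t(n)}, with s(n)/n → κ and t(n)/n → μ (κ, μ > 0): if p is a crossing pair partition of {1,...,2k}, then #S_n(p) = o(n^{k+1}), where S_n(p) is the set of pairs (φ,ψ) with φ constant on blocks of m, ψ constant on blocks of n, and (φ(i),ψ(i)) ~_n (φ(j),ψ(j)) if and only if i ~_p j. -/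
set_option maxHeartbeats 1000000
set_option linter.unusedSectionVars false
set_option linter.unusedVariables false

namespace CPPaux
set_option linter.unusedSectionVars false
set_option linter.unusedVariables false




/-- vertex determined at step `t` of the sweep -/
def vtxF (P1 Q1 P2 Q2 N t : ℕ) : ℕ :=
  if t < Q1 - P1 - 1 then P1 + 2 + t
  else if t < Q1 - P1 - 1 + (P2 - Q1 - 1) then P2 - 1 - (t - (Q1 - P1 - 1))
  else if t < Q1 - P1 - 1 + (P2 - Q1 - 1) + (Q2 - P2 - 1) then
    P2 + 2 + (t - (Q1 - P1 - 1) - (P2 - Q1 - 1))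
  else P1 + N - 1 - (t - (Q1 - P1 - 1) - (P2 - Q1 - 1) - (Q2 - P2 - 1))

/-- whether step `t` is a forward traversal -/
def fwdF (P1 Q1 P2 Q2 t : ℕ) : Prop :=
  t < Q1 - P1 - 1 ∨ (Q1 - P1 - 1 + (P2 - Q1 - 1) ≤ t ∧
    t < Q1 - P1 - 1 + (P2 - Q1 - 1) + (Q2 - P2 - 1))

instance (P1 Q1 P2 Q2 t : ℕ) : Decidable (fwdF P1 Q1 P2 Q2 t) := by
  unfold fwdF; infer_instance

/-- the edge traversed at step `t` -/
def edgF (P1 Q1 P2 Q2 N t : ℕ) : ℕ :=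
  if fwdF P1 Q1 P2 Q2 t then vtxF P1 Q1 P2 Q2 N t - 1 else vtxF P1 Q1 P2 Q2 N t

/-- index of the "near" (already known) endpoint of the edge traversed at step `t` -/
def nearF (P1 Q1 P2 Q2 N t : ℕ) : ℕ :=
  if fwdF P1 Q1 P2 Q2 t then vtxF P1 Q1 P2 Q2 N t - 1 else vtxF P1 Q1 P2 Q2 N t + 1

section
variable {P1 Q1 P2 Q2 N k : ℕ} (h12 : P1 < Q1) (h23 : Q1 < P2) (h34 : P2 < Q2)
  (h4N : Q2 < N)

include h12 h23 h34 h4N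

lemma vtx_range {t : ℕ} (ht : t < N - 4) :
    P1 + 2 ≤ vtxF P1 Q1 P2 Q2 N t ∧ vtxF P1 Q1 P2 Q2 N t ≤ P1 + N - 1 ∧
    vtxF P1 Q1 P2 Q2 N t ≠ P1 + 1 ∧ vtxF P1 Q1 P2 Q2 N t ≠ P2 ∧
    vtxF P1 Q1 P2 Q2 N t ≠ P2 + 1 := by
  simp only [vtxF]; split_ifs <;> omega

lemma vtx_inj {t t' : ℕ} (ht : t < N - 4) (ht' : t' < N - 4) (hne : t ≠ t') :
    vtxF P1 Q1 P2 Q2 N t ≠ vtxF P1 Q1 P2 Q2 N t' := by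
  simp only [vtxF]; split_ifs <;> omega

lemma edg_range {t : ℕ} (ht : t < N - 4) :
    P1 + 1 ≤ edgF P1 Q1 P2 Q2 N t ∧ edgF P1 Q1 P2 Q2 N t ≤ P1 + N - 1 ∧
    edgF P1 Q1 P2 Q2 N t ≠ Q1 ∧ edgF P1 Q1 P2 Q2 N t ≠ P2 ∧
    edgF P1 Q1 P2 Q2 N t ≠ Q2 := by
  by_cases hf : fwdF P1 Q1 P2 Q2 t <;> simp only [edgF, hf, if_true, if_false, vtxF] <;> simp only [fwdF] at hf <;> split_ifs <;> omega

lemma edg_inj {t t' : ℕ} (ht : t < N - 4) (ht' : t' < N - 4) (hne : t ≠ t') :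
    edgF P1 Q1 P2 Q2 N t ≠ edgF P1 Q1 P2 Q2 N t' := by
  by_cases hf : fwdF P1 Q1 P2 Q2 t <;> by_cases hf' : fwdF P1 Q1 P2 Q2 t' <;> simp only [edgF, hf, hf', if_true, if_false, vtxF] <;> simp only [fwdF] at hf hf' <;> split_ifs <;> omega

lemma edg_surj {e : ℕ} (he1 : P1 + 1 ≤ e) (he2 : e ≤ P1 + N - 1)
    (he3 : e ≠ Q1) (he4 : e ≠ P2) (he5 : e ≠ Q2) :
    ∃ t, t < N - 4 ∧ edgF P1 Q1 P2 Q2 N t = e := by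
  refine ⟨if e < Q1 then e - P1 - 1 else if e < P2 then (Q1 - P1 - 1) + (P2 - 1 - e)
    else if e < Q2 then (Q1 - P1 - 1) + (P2 - Q1 - 1) + (e - P2 - 1)
    else (Q1 - P1 - 1) + (P2 - Q1 - 1) + (Q2 - P2 - 1) + (P1 + N - 1 - e), ?_, ?_⟩
  · split_ifs <;> omega
  · simp only [edgF, fwdF, vtxF]; split_ifs <;> omega

lemma near_cases {t : ℕ} (ht : t < N - 4) :
    nearF P1 Q1 P2 Q2 N t = P1 + 1 ∨ nearF P1 Q1 P2 Q2 N t = P2 ∨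
    nearF P1 Q1 P2 Q2 N t = P2 + 1 ∨ nearF P1 Q1 P2 Q2 N t = P1 + N ∨
    (0 < t ∧ vtxF P1 Q1 P2 Q2 N (t - 1) = nearF P1 Q1 P2 Q2 N t) := by
  by_cases hf : fwdF P1 Q1 P2 Q2 t <;> simp only [nearF, hf, if_true, if_false, vtxF] <;> simp only [fwdF] at hf <;> split_ifs <;> omega

lemma edg_endpoints {t : ℕ} (ht : t < N - 4) :
    (edgF P1 Q1 P2 Q2 N t = vtxF P1 Q1 P2 Q2 N t ∧
      edgF P1 Q1 P2 Q2 N t + 1 = nearF P1 Q1 P2 Q2 N t) ∨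
    (edgF P1 Q1 P2 Q2 N t = nearF P1 Q1 P2 Q2 N t ∧
      edgF P1 Q1 P2 Q2 N t + 1 = vtxF P1 Q1 P2 Q2 N t) := by
  have hv := vtx_range h12 h23 h34 h4N ht
  by_cases hf : fwdF P1 Q1 P2 Q2 t
  · rw [edgF, nearF, if_pos hf, if_pos hf]; omega
  · rw [edgF, nearF, if_neg hf, if_neg hf]; omega

end

/-- lift of a residue to the window `(P1, P1+N]` -/
def liftN (P1 N v : ℕ) : ℕ := if P1 < v then v else v + N




/-- the variable at (cyclic) vertex position `j` -/
def wvF (k' : ℕ) (j : ℕ) : Fin (k' + 2) ⊕ Fin (k' + 2) :=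
  if j % 2 = 0 then
    Sum.inr ⟨j % (2 * (k' + 2)) / 2, by
      have := Nat.mod_lt j (y := 2 * (k' + 2)) (by omega); omega⟩
  else
    Sum.inl ⟨j % (2 * (k' + 2)) / 2, by
      have := Nat.mod_lt j (y := 2 * (k' + 2)) (by omega); omega⟩

/-- the row (S) variable index of edge `j` -/
def avsF (k' : ℕ) (j : ℕ) : Fin (k' + 2) :=
  ⟨j % (2 * (k' + 2)) / 2, by
    have := Nat.mod_lt j (y := 2 * (k' + 2)) (by omega); omega⟩

/-- the column (T) variable index of edge `j` -/
def bvsF (k' : ℕ) (j : ℕ) : Fin (k' + 2) :=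
  ⟨(j % (2 * (k' + 2)) + 1) / 2 % (k' + 2), Nat.mod_lt _ (by omega)⟩

/-- the position in `Fin (2k)` of an edge index -/
def ePosF (k' : ℕ) (j : ℕ) : Fin (2 * (k' + 2)) :=
  ⟨j % (2 * (k' + 2)), Nat.mod_lt _ (by omega)⟩

lemma wvF_period (k' j : ℕ) : wvF k' (j + 2 * (k' + 2)) = wvF k' j := by
  have h2 : (j + 2 * (k' + 2)) % 2 = j % 2 := by omega
  simp only [wvF, h2, Nat.add_mod_right]

lemma wvF_inj (k' : ℕ) {c j1 j2 : ℕ} (h1 : c ≤ j1) (h1' : j1 < c + 2 * (k' + 2))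
    (h2 : c ≤ j2) (h2' : j2 < c + 2 * (k' + 2)) (he : wvF k' j1 = wvF k' j2) :
    j1 = j2 := by
  have m1 : j1 % (2 * (k' + 2)) < 2 * (k' + 2) := Nat.mod_lt _ (by omega)
  have m2 : j2 % (2 * (k' + 2)) < 2 * (k' + 2) := Nat.mod_lt _ (by omega)
  have p1 : j1 % (2 * (k' + 2)) % 2 = j1 % 2 := Nat.mod_mod_of_dvd _ ⟨k' + 2, rfl⟩
  have p2 : j2 % (2 * (k' + 2)) % 2 = j2 % 2 := Nat.mod_mod_of_dvd _ ⟨k' + 2, rfl⟩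
  have key : j1 % (2 * (k' + 2)) = j2 % (2 * (k' + 2)) := by
    simp only [wvF] at he
    split_ifs at he with a b b <;>
      simp only [Sum.inr.injEq, Sum.inl.injEq, Fin.mk.injEq] at he <;> omega
  have hmod : j1 ≡ j2 [MOD 2 * (k' + 2)] := key
  rcases le_total j1 j2 with hle | hle
  · have hd : 2 * (k' + 2) ∣ j2 - j1 := (Nat.modEq_iff_dvd' hle).mp hmod
    have := Nat.eq_zero_of_dvd_of_lt hd (by omega)
    omega
  · have hd : 2 * (k' + 2) ∣ j1 - j2 := (Nat.modEq_iff_dvd' hle).mp hmod.symm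
    have := Nat.eq_zero_of_dvd_of_lt hd (by omega)
    omega

lemma wvF_surj (k' : ℕ) (c : ℕ) (v : Fin (k' + 2) ⊕ Fin (k' + 2)) :
    ∃ j, c ≤ j ∧ j < c + 2 * (k' + 2) ∧ wvF k' j = v := by
  classical
  set F : Fin (2 * (k' + 2)) → Fin (k' + 2) ⊕ Fin (k' + 2) :=
    fun i => wvF k' (c + i.val) with hF
  have hinj : Function.Injective F := by
    intro i1 i2 h
    have := wvF_inj k' (c := c) (j1 := c + i1.val) (j2 := c + i2.val)
      (by omega) (by have := i1.isLt; omega) (by omega) (by have := i2.isLt; omega) h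
    exact Fin.ext (by omega)
  have hsurj : Function.Surjective F := by
    have hbij : Function.Bijective F := (Fintype.bijective_iff_injective_and_card F).mpr
      ⟨hinj, by simp [Fintype.card_sum]; ring⟩
    exact hbij.2
  obtain ⟨i, hi⟩ := hsurj v
  exact ⟨c + i.val, by omega, by have := i.isLt; omega, hi⟩

/-- the endpoints of edge `e` are its row and column variables -/
lemma edge_vars (k' : ℕ) (e : ℕ) :
    (wvF k' e = Sum.inr (bvsF k' e) ∧ wvF k' (e + 1) = Sum.inl (avsF k' e)) ∨
    (wvF k' e = Sum.inl (avsF k' e) ∧ wvF k' (e + 1) = Sum.inr (bvsF k' e)) := by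
  have hm : e % (2 * (k' + 2)) < 2 * (k' + 2) := Nat.mod_lt _ (by omega)
  have hp : e % (2 * (k' + 2)) % 2 = e % 2 := Nat.mod_mod_of_dvd _ ⟨k' + 2, rfl⟩
  have hsucc : (e + 1) % (2 * (k' + 2)) = (e % (2 * (k' + 2)) + 1) % (2 * (k' + 2)) := by
    rw [Nat.add_mod e 1, Nat.mod_eq_of_lt (show (1:ℕ) < 2 * (k' + 2) by omega)]
  rcases Nat.even_or_odd e with he | he
  · left
    have h0 : e % 2 = 0 := Nat.even_iff.mp he
    have h1 : (e + 1) % 2 = 1 := by omega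
    have hlt : e % (2 * (k' + 2)) + 1 < 2 * (k' + 2) := by omega
    have hs' : (e + 1) % (2 * (k' + 2)) = e % (2 * (k' + 2)) + 1 := by
      rw [hsucc, Nat.mod_eq_of_lt hlt]
    constructor
    · simp only [wvF, bvsF]
      rw [if_pos h0]
      refine congrArg Sum.inr (Fin.ext ?_)
      show e % (2 * (k' + 2)) / 2 = (e % (2 * (k' + 2)) + 1) / 2 % (k' + 2)
      have ha : (e % (2 * (k' + 2)) + 1) / 2 = e % (2 * (k' + 2)) / 2 := by omega
      rw [ha, Nat.mod_eq_of_lt (show e % (2 * (k' + 2)) / 2 < k' + 2 by omega)]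
    · simp only [wvF, avsF]
      rw [if_neg (by omega : ¬ (e + 1) % 2 = 0)]
      refine congrArg Sum.inl (Fin.ext ?_)
      show (e + 1) % (2 * (k' + 2)) / 2 = e % (2 * (k' + 2)) / 2
      rw [hs']
      omega
  · right
    have h0 : e % 2 = 1 := Nat.odd_iff.mp he
    have h1 : (e + 1) % 2 = 0 := by omega
    constructor
    · simp only [wvF, avsF]
      rw [if_neg (by omega : ¬ e % 2 = 0)]
    · simp only [wvF, bvsF]
      rw [if_pos h1]
      refine congrArg Sum.inr (Fin.ext ?_)
      show (e + 1) % (2 * (k' + 2)) / 2 = (e % (2 * (k' + 2)) + 1) / 2 % (k' + 2)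
      rcases Nat.lt_or_ge (e % (2 * (k' + 2)) + 1) (2 * (k' + 2)) with hlt | hge
      · have hs' : (e + 1) % (2 * (k' + 2)) = e % (2 * (k' + 2)) + 1 := by
          rw [hsucc, Nat.mod_eq_of_lt hlt]
        rw [hs', Nat.mod_eq_of_lt (show (e % (2 * (k' + 2)) + 1) / 2 < k' + 2 by omega)]
      · have heq : e % (2 * (k' + 2)) + 1 = 2 * (k' + 2) := by omega
        have hs' : (e + 1) % (2 * (k' + 2)) = 0 := by rw [hsucc, heq, Nat.mod_self]
        rw [hs', heq]
        have h2 : 2 * (k' + 2) / 2 = k' + 2 := by omega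
        rw [h2, Nat.mod_self]




section
variable {S T : Type*} [Fintype S] [Fintype T] [DecidableEq S] [DecidableEq T]

/-- the point of position `i` under an assignment `γ` -/
def PTmap {k : ℕ} (γ : (Fin k → S) × (Fin k → T)) (i : Fin (2 * k)) : S × T :=
  (γ.1 ⟨i.val / 2, by have := i.isLt; omega⟩,
   γ.2 ⟨(i.val + 1) / 2 % k, Nat.mod_lt _ (by have := i.isLt; omega)⟩)

/-- restriction of an assignment to a set of variables (default elsewhere) -/
def rho {k : ℕ} (dS : S) (dT : T) (D : Finset (Fin k ⊕ Fin k))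
    (γ : (Fin k → S) × (Fin k → T)) : (Fin k → S) × (Fin k → T) :=
  (fun i => if Sum.inl i ∈ D then γ.1 i else dS,
   fun i => if Sum.inr i ∈ D then γ.2 i else dT)

/-- the value of variable `v` under assignment `x` -/
def getv {k : ℕ} (x : (Fin k → S) × (Fin k → T)) : (Fin k ⊕ Fin k) → S ⊕ T :=
  Sum.elim (fun i => Sum.inl (x.1 i)) (fun i => Sum.inr (x.2 i))

lemma rho_comp {k : ℕ} (dS : S) (dT : T) {D D' : Finset (Fin k ⊕ Fin k)} (h : D ⊆ D')
    (γ : (Fin k → S) × (Fin k → T)) : rho dS dT D (rho dS dT D' γ) = rho dS dT D γ := by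
  unfold rho
  refine Prod.ext ?_ ?_ <;> simp only <;> funext i
  · by_cases hi : Sum.inl i ∈ D
    · simp [hi, h hi]
    · simp [hi]
  · by_cases hi : Sum.inr i ∈ D
    · simp [hi, h hi]
    · simp [hi]

lemma rho_univ {k : ℕ} (dS : S) (dT : T) (γ : (Fin k → S) × (Fin k → T)) :
    rho dS dT Finset.univ γ = γ := by
  unfold rho
  refine Prod.ext ?_ ?_ <;> simp

lemma rho_default_fst {k : ℕ} (dS : S) (dT : T) {D : Finset (Fin k ⊕ Fin k)}
    {A : Finset ((Fin k → S) × (Fin k → T))} {x : (Fin k → S) × (Fin k → T)}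
    (hx : x ∈ A.image (rho dS dT D)) {i : Fin k} (hi : Sum.inl i ∉ D) : x.1 i = dS := by
  obtain ⟨γ, _, rfl⟩ := Finset.mem_image.mp hx
  simp [rho, hi]

lemma rho_default_snd {k : ℕ} (dS : S) (dT : T) {D : Finset (Fin k ⊕ Fin k)}
    {A : Finset ((Fin k → S) × (Fin k → T))} {x : (Fin k → S) × (Fin k → T)}
    (hx : x ∈ A.image (rho dS dT D)) {i : Fin k} (hi : Sum.inr i ∉ D) : x.2 i = dT := by
  obtain ⟨γ, _, rfl⟩ := Finset.mem_image.mp hx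
  simp [rho, hi]

lemma rho_mem_fst {k : ℕ} (dS : S) (dT : T) {D : Finset (Fin k ⊕ Fin k)}
    (γ : (Fin k → S) × (Fin k → T)) {i : Fin k} (hi : Sum.inl i ∈ D) :
    (rho dS dT D γ).1 i = γ.1 i := by simp [rho, hi]

lemma rho_mem_snd {k : ℕ} (dS : S) (dT : T) {D : Finset (Fin k ⊕ Fin k)}
    (γ : (Fin k → S) × (Fin k → T)) {i : Fin k} (hi : Sum.inr i ∈ D) :
    (rho dS dT D γ).2 i = γ.2 i := by simp [rho, hi]

/-- two assignments in the image of `rho D'` agreeing on `D'` are equal -/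
lemma rho_ext {k : ℕ} (dS : S) (dT : T) {D' : Finset (Fin k ⊕ Fin k)}
    {A : Finset ((Fin k → S) × (Fin k → T))} {x x' : (Fin k → S) × (Fin k → T)}
    (hx : x ∈ A.image (rho dS dT D')) (hx' : x' ∈ A.image (rho dS dT D'))
    (h : ∀ v ∈ D', getv x v = getv x' v) : x = x' := by
  refine Prod.ext ?_ ?_ <;> funext i
  · by_cases hi : Sum.inl i ∈ D'
    · have := h _ hi
      simpa [getv] using this
    · rw [rho_default_fst dS dT hx hi, rho_default_fst dS dT hx' hi]
  · by_cases hi : Sum.inr i ∈ D'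
    · have := h _ hi
      simpa [getv] using this
    · rw [rho_default_snd dS dT hx hi, rho_default_snd dS dT hx' hi]

/-- in a fiber of `rho D`, assignments agree on `D` -/
lemma fiber_agree {k : ℕ} (dS : S) (dT : T) {D : Finset (Fin k ⊕ Fin k)}
    {x x' y : (Fin k → S) × (Fin k → T)}
    (hxy : rho dS dT D x = y) (hx'y : rho dS dT D x' = y) :
    ∀ v ∈ D, getv x v = getv x' v := by
  intro v hv
  match v with
  | Sum.inl i =>
    have e1 : x.1 i = y.1 i := by rw [← hxy, rho_mem_fst dS dT x hv]
    have e2 : x'.1 i = y.1 i := by rw [← hx'y, rho_mem_fst dS dT x' hv]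
    simp [getv, e1, e2]
  | Sum.inr i =>
    have e1 : x.2 i = y.2 i := by rw [← hxy, rho_mem_snd dS dT x hv]
    have e2 : x'.2 i = y.2 i := by rw [← hx'y, rho_mem_snd dS dT x' hv]
    simp [getv, e1, e2]

/-- the generic one-step estimate -/
lemma step_main {k : ℕ} (dS : S) (dT : T) (A : Finset ((Fin k → S) × (Fin k → T)))
    (D : Finset (Fin k ⊕ Fin k)) (u : Fin k ⊕ Fin k) (m : ℕ)
    (hm : ∀ y, ((A.image (rho dS dT (insert u D))).filter
      (fun x => rho dS dT D x = y)).card ≤ m) :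
    (A.image (rho dS dT (insert u D))).card ≤ m * (A.image (rho dS dT D)).card := by
  classical
  have himg : (A.image (rho dS dT (insert u D))).image (rho dS dT D)
      = A.image (rho dS dT D) := by
    rw [Finset.image_image]
    exact Finset.image_congr (fun γ _ => rho_comp dS dT (Finset.subset_insert u D) γ)
  calc (A.image (rho dS dT (insert u D))).card
      ≤ m * ((A.image (rho dS dT (insert u D))).image (rho dS dT D)).card := by
        exact Finset.card_le_mul_card_image _ _ (fun y hy => hm y)
    _ = m * (A.image (rho dS dT D)).card := by rw [himg]

/-- a free determination step -/
lemma step_free {k : ℕ} (dS : S) (dT : T) (A : Finset ((Fin k → S) × (Fin k → T)))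
    (D : Finset (Fin k ⊕ Fin k)) (u : Fin k ⊕ Fin k) :
    (A.image (rho dS dT (insert u D))).card ≤
      (Fintype.card S + Fintype.card T) * (A.image (rho dS dT D)).card := by
  classical
  refine step_main dS dT A D u _ (fun y => ?_)
  rw [← Fintype.card_sum, ← Finset.card_univ]
  refine Finset.card_le_card_of_injOn (fun x => getv x u)
    (fun x hx => Finset.mem_univ _) ?_
  intro x hx x' hx' hval
  simp only [Finset.coe_filter, Set.mem_setOf_eq] at hx hx'
  refine rho_ext dS dT hx.1 hx'.1 (fun v hv => ?_)
  rcases Finset.mem_insert.mp hv with rfl | hvD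
  · exact hval
  · exact fiber_agree dS dT hx.2 hx'.2 v hvD

/-- a closed step determining a column (T) variable, via (MP2) -/
lemma step_closed_b {k : ℕ} (dS : S) (dT : T) (Rel : Setoid (S × T)) (B : ℕ)
    (hB : ∀ (P : S × T) (a' : S), {q' : T | Rel.r P (a', q')}.ncard ≤ B)
    (A : Finset ((Fin k → S) × (Fin k → T))) (D : Finset (Fin k ⊕ Fin k))
    (ia ib ja jb : Fin k)
    (hrel : ∀ γ ∈ A, Rel.r (γ.1 ja, γ.2 jb) (γ.1 ia, γ.2 ib))
    (hja : Sum.inl ja ∈ D) (hjb : Sum.inr jb ∈ D) (hia : Sum.inl ia ∈ D) :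
    (A.image (rho dS dT (insert (Sum.inr ib) D))).card ≤
      B * (A.image (rho dS dT D)).card := by
  classical
  refine step_main dS dT A D _ _ (fun y => ?_)
  by_cases hbD : Sum.inr ib ∈ D
  · -- the variable is already determined: fiber has at most one element ≤ B?
    -- then insert is no-op on membership; fiber card ≤ 1 ≤ B? B could be 0!
    -- use the relation: the fiber is nonempty → y.2 ib realizes the relation, so B ≥ 1.
    have hins : insert (Sum.inr ib) D = D := Finset.insert_eq_self.mpr hbD
    rw [hins]
    rcases Finset.eq_empty_or_nonempty ((A.image (rho dS dT D)).filter
      (fun x => rho dS dT D x = y)) with he | hne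
    · rw [he]; simp
    · obtain ⟨x0, hx0⟩ := hne
      have hx0' := Finset.mem_filter.mp hx0
      have hcard1 : ((A.image (rho dS dT D)).filter
          (fun x => rho dS dT D x = y)).card ≤ 1 := by
        refine Finset.card_le_one.mpr (fun a ha b hb => ?_)
        have ha' := Finset.mem_filter.mp ha
        have hb' := Finset.mem_filter.mp hb
        exact rho_ext dS dT ha'.1 hb'.1
          (fiber_agree dS dT ha'.2 hb'.2)
      have hB1 : 1 ≤ B := by
        obtain ⟨γ, hγA, hγx⟩ := Finset.mem_image.mp hx0'.1
        have hr := hrel γ hγA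
        have : γ.2 ib ∈ {q' : T | Rel.r (γ.1 ja, γ.2 jb) (γ.1 ia, q')} := hr
        have hpos : 0 < {q' : T | Rel.r (γ.1 ja, γ.2 jb) (γ.1 ia, q')}.ncard := by
          rw [Set.ncard_pos (Set.toFinite _)]
          exact ⟨_, this⟩
        exact le_trans hpos (hB _ _)
      omega
  · refine le_trans (Finset.card_le_card_of_injOn
      (t := (Set.toFinite {q' : T | Rel.r (y.1 ja, y.2 jb) (y.1 ia, q')}).toFinset)
      (fun x => x.2 ib) ?_ ?_) ?_
    · -- maps into the finite set of admissible values
      intro x hx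
      have hx' := Finset.mem_filter.mp hx
      obtain ⟨γ, hγA, hγx⟩ := Finset.mem_image.mp hx'.1
      have hr := hrel γ hγA
      refine (Set.Finite.mem_toFinset _).mpr ?_
      show x.2 ib ∈ {q' : T | Rel.r (y.1 ja, y.2 jb) (y.1 ia, q')}
      have hxib : x.2 ib = γ.2 ib := by
        rw [← hγx, rho_mem_snd dS dT γ (Finset.mem_insert_self _ _)]
      have hya : y.1 ja = γ.1 ja := by
        rw [← hx'.2, ← hγx, rho_mem_fst dS dT _ hja,
          rho_mem_fst dS dT γ (Finset.mem_insert_of_mem hja)]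
      have hyb : y.2 jb = γ.2 jb := by
        rw [← hx'.2, ← hγx, rho_mem_snd dS dT _ hjb,
          rho_mem_snd dS dT γ (Finset.mem_insert_of_mem hjb)]
      have hyi : y.1 ia = γ.1 ia := by
        rw [← hx'.2, ← hγx, rho_mem_fst dS dT _ hia,
          rho_mem_fst dS dT γ (Finset.mem_insert_of_mem hia)]
      rw [hxib, hya, hyb, hyi]
      exact hr
    · intro x hx x' hx' hval
      simp only [Finset.coe_filter, Set.mem_setOf_eq] at hx hx'
      refine rho_ext dS dT hx.1 hx'.1 (fun v hv => ?_)
      rcases Finset.mem_insert.mp hv with rfl | hvD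
      · simpa [getv] using hval
      · exact fiber_agree dS dT hx.2 hx'.2 v hvD
    · rw [← Set.ncard_eq_toFinset_card _ (Set.toFinite _)]
      exact hB _ _

/-- a closed step determining a row (S) variable, via (MP2') -/
lemma step_closed_a {k : ℕ} (dS : S) (dT : T) (Rel : Setoid (S × T)) (B : ℕ)
    (hB' : ∀ (P : S × T) (q' : T), {a' : S | Rel.r P (a', q')}.ncard ≤ B)
    (A : Finset ((Fin k → S) × (Fin k → T))) (D : Finset (Fin k ⊕ Fin k))
    (ia ib ja jb : Fin k)
    (hrel : ∀ γ ∈ A, Rel.r (γ.1 ja, γ.2 jb) (γ.1 ia, γ.2 ib))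
    (hja : Sum.inl ja ∈ D) (hjb : Sum.inr jb ∈ D) (hib : Sum.inr ib ∈ D) :
    (A.image (rho dS dT (insert (Sum.inl ia) D))).card ≤
      B * (A.image (rho dS dT D)).card := by
  classical
  refine step_main dS dT A D _ _ (fun y => ?_)
  by_cases hbD : Sum.inl ia ∈ D
  · have hins : insert (Sum.inl ia) D = D := Finset.insert_eq_self.mpr hbD
    rw [hins]
    rcases Finset.eq_empty_or_nonempty ((A.image (rho dS dT D)).filter
      (fun x => rho dS dT D x = y)) with he | hne
    · rw [he]; simp
    · obtain ⟨x0, hx0⟩ := hne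
      have hx0' := Finset.mem_filter.mp hx0
      have hcard1 : ((A.image (rho dS dT D)).filter
          (fun x => rho dS dT D x = y)).card ≤ 1 := by
        refine Finset.card_le_one.mpr (fun a ha b hb => ?_)
        have ha' := Finset.mem_filter.mp ha
        have hb' := Finset.mem_filter.mp hb
        exact rho_ext dS dT ha'.1 hb'.1 (fiber_agree dS dT ha'.2 hb'.2)
      have hB1 : 1 ≤ B := by
        obtain ⟨γ, hγA, hγx⟩ := Finset.mem_image.mp hx0'.1
        have hr := hrel γ hγA
        have hmem : γ.1 ia ∈ {a' : S | Rel.r (γ.1 ja, γ.2 jb) (a', γ.2 ib)} := hr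
        have hpos : 0 < {a' : S | Rel.r (γ.1 ja, γ.2 jb) (a', γ.2 ib)}.ncard := by
          rw [Set.ncard_pos (Set.toFinite _)]
          exact ⟨_, hmem⟩
        exact le_trans hpos (hB' _ _)
      omega
  · refine le_trans (Finset.card_le_card_of_injOn
      (t := (Set.toFinite {a' : S | Rel.r (y.1 ja, y.2 jb) (a', y.2 ib)}).toFinset)
      (fun x => x.1 ia) ?_ ?_) ?_
    · intro x hx
      have hx' := Finset.mem_filter.mp hx
      obtain ⟨γ, hγA, hγx⟩ := Finset.mem_image.mp hx'.1
      have hr := hrel γ hγA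
      refine (Set.Finite.mem_toFinset _).mpr ?_
      show x.1 ia ∈ {a' : S | Rel.r (y.1 ja, y.2 jb) (a', y.2 ib)}
      have hxia : x.1 ia = γ.1 ia := by
        rw [← hγx, rho_mem_fst dS dT γ (Finset.mem_insert_self _ _)]
      have hya : y.1 ja = γ.1 ja := by
        rw [← hx'.2, ← hγx, rho_mem_fst dS dT _ hja,
          rho_mem_fst dS dT γ (Finset.mem_insert_of_mem hja)]
      have hyb : y.2 jb = γ.2 jb := by
        rw [← hx'.2, ← hγx, rho_mem_snd dS dT _ hjb,
          rho_mem_snd dS dT γ (Finset.mem_insert_of_mem hjb)]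
      have hyi : y.2 ib = γ.2 ib := by
        rw [← hx'.2, ← hγx, rho_mem_snd dS dT _ hib,
          rho_mem_snd dS dT γ (Finset.mem_insert_of_mem hib)]
      rw [hxia, hya, hyb, hyi]
      exact hr
    · intro x hx x' hx' hval
      simp only [Finset.coe_filter, Set.mem_setOf_eq] at hx hx'
      refine rho_ext dS dT hx.1 hx'.1 (fun v hv => ?_)
      rcases Finset.mem_insert.mp hv with rfl | hvD
      · simpa [getv] using hval
      · exact fiber_agree dS dT hx.2 hx'.2 v hvD
    · rw [← Set.ncard_eq_toFinset_card _ (Set.toFinite _)]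
      exact hB' _ _

/-- the set of admissible assignments -/
noncomputable def AFin (k : ℕ) (Rel : Setoid (S × T)) (p : Setoid (Fin (2 * k))) :
    Finset ((Fin k → S) × (Fin k → T)) :=
  @Finset.filter _ (fun γ => ∀ i j, p.r i j → Rel.r (PTmap γ i) (PTmap γ j))
    (Classical.decPred _) Finset.univ

lemma mem_AFin {k : ℕ} {Rel : Setoid (S × T)} {p : Setoid (Fin (2 * k))}
    {γ : (Fin k → S) × (Fin k → T)} :
    γ ∈ AFin k Rel p ↔ ∀ i j, p.r i j → Rel.r (PTmap γ i) (PTmap γ j) := by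
  unfold AFin
  constructor
  · intro h
    exact ((@Finset.mem_filter _ _ (Classical.decPred _) _ _).mp h).2
  · intro h
    exact (@Finset.mem_filter _ _ (Classical.decPred _) _ _).mpr ⟨Finset.mem_univ _, h⟩

end



section
variable {P1 Q1 P2 Q2 N k : ℕ} (h12 : P1 < Q1) (h23 : Q1 < P2) (h34 : P2 < Q2)
  (h4N : Q2 < N)
include h12 h23 h34 h4N

lemma vtx_surj {v : ℕ} (hv1 : P1 + 2 ≤ v) (hv2 : v ≤ P1 + N - 1)
    (hv3 : v ≠ P2) (hv4 : v ≠ P2 + 1) :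
    ∃ t, t < N - 4 ∧ vtxF P1 Q1 P2 Q2 N t = v := by
  refine ⟨if v ≤ Q1 then v - P1 - 2 else if v < P2 then (Q1 - P1 - 1) + (P2 - 1 - v)
    else if v ≤ Q2 then (Q1 - P1 - 1) + (P2 - Q1 - 1) + (v - P2 - 2)
    else (Q1 - P1 - 1) + (P2 - Q1 - 1) + (Q2 - P2 - 1) + (P1 + N - 1 - v), ?_, ?_⟩
  · split_ifs <;> omega
  · simp only [vtxF]; split_ifs <;> omega

end

section
variable (k' P1 : ℕ)

lemma ePos_lift (x : Fin (2 * (k' + 2))) :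
    ePosF k' (liftN P1 (2 * (k' + 2)) x.val) = x := by
  unfold liftN ePosF
  refine Fin.ext ?_
  simp only
  split_ifs
  · exact Nat.mod_eq_of_lt x.isLt
  · rw [Nat.add_mod_right]
    exact Nat.mod_eq_of_lt x.isLt

lemma lift_ePos (h0 : P1 < 2 * (k' + 2)) {e : ℕ} (h1 : P1 < e) (h2 : e < P1 + 2 * (k' + 2)) :
    liftN P1 (2 * (k' + 2)) (ePosF k' e).val = e := by
  unfold liftN ePosF
  simp only
  have hm : e % (2 * (k' + 2)) < 2 * (k' + 2) := Nat.mod_lt _ (by omega)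
  rcases Nat.lt_or_ge e (2 * (k' + 2)) with h | h
  · rw [Nat.mod_eq_of_lt h, if_pos h1]
  · have he : e % (2 * (k' + 2)) = e - 2 * (k' + 2) := by
      have h' : e - 2 * (k' + 2) < 2 * (k' + 2) := by omega
      conv_lhs => rw [show e = (e - 2 * (k' + 2)) + 2 * (k' + 2) by omega]
      rw [Nat.add_mod_right, Nat.mod_eq_of_lt h']
    rw [he, if_neg (by omega)]
    omega

lemma PT_vars {S T : Type*} (γ : (Fin (k' + 2) → S) × (Fin (k' + 2) → T)) (e : ℕ) :
    PTmap γ (ePosF k' e) = (γ.1 (avsF k' e), γ.2 (bvsF k' e)) := rfl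

end

/-- a pairing function for a pair partition -/
lemma exists_pairing {m : ℕ} (p : Setoid (Fin m)) (hpair : IsPairPartition p) :
    ∃ pr : Fin m → Fin m, (∀ x, p.r x (pr x)) ∧ (∀ x, pr x ≠ x) ∧
      (∀ x y, p.r x y → y = x ∨ y = pr x) := by
  have key : ∀ x : Fin m, ∃ y : Fin m, p.r x y ∧ y ≠ x ∧
      (∀ z, p.r x z → z = x ∨ z = y) := by
    intro x
    have hcl : {z : Fin m | p.r z x} ∈ p.classes := ⟨x, rfl⟩
    have h2 := hpair _ hcl
    obtain ⟨a, b, hab, hC⟩ := Set.ncard_eq_two.mp h2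
    have hx : x ∈ {z : Fin m | p.r z x} := p.iseqv.refl x
    rw [hC] at hx
    have hmem : ∀ z, p.r x z → z = a ∨ z = b := by
      intro z hz
      have : z ∈ {z : Fin m | p.r z x} := p.iseqv.symm hz
      rw [hC] at this
      simpa using this
    have haM : p.r a x := by
      have : a ∈ ({a, b} : Set (Fin m)) := by simp
      rw [← hC] at this; exact this
    have hbM : p.r b x := by
      have : b ∈ ({a, b} : Set (Fin m)) := by simp
      rw [← hC] at this; exact this
    rcases hx with rfl | rfl
    · exact ⟨b, p.iseqv.symm hbM, fun h => hab h.symm, fun z hz => hmem z hz⟩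
    · refine ⟨a, p.iseqv.symm haM, fun h => hab h, fun z hz => ?_⟩
      rcases hmem z hz with h | h
      · right; exact h
      · left; exact h
  choose pr h1 h2 h3 using key
  exact ⟨pr, h1, h2, h3⟩


lemma core_bound {S T : Type*} [Fintype S] [Fintype T] [DecidableEq S] [DecidableEq T]
    (k' : ℕ) (Rel : Setoid (S × T)) (B : ℕ)
    (hB : ∀ (P : S × T) (a' : S), {q' : T | Rel.r P (a', q')}.ncard ≤ B)
    (hB' : ∀ (P : S × T) (q' : T), {a' : S | Rel.r P (a', q')}.ncard ≤ B)
    (p : Setoid (Fin (2 * (k' + 2)))) (pr : Fin (2 * (k' + 2)) → Fin (2 * (k' + 2)))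
    (hpr1 : ∀ x, p.r x (pr x)) (hpr2 : ∀ x, pr x ≠ x) (hprI : ∀ x, pr (pr x) = x)
    (p1 q1 p2 q2 : Fin (2 * (k' + 2)))
    (h12 : p1.val < q1.val) (h23 : q1.val < p2.val) (h34 : p2.val < q2.val)
    (hpp : pr p1 = p2) (hqq : pr q1 = q2) :
    (AFin (k' + 2) Rel p).card ≤
      (B + 1) ^ (2 * (k' + 2)) * (Fintype.card S + Fintype.card T) ^ k' *
        {x : (S × T) × (S × T) | Rel.r x.1 x.2}.ncard := by
  classical
  rcases isEmpty_or_nonempty S with hS | hS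
  · have he : AFin (k' + 2) Rel p = ∅ :=
      Finset.eq_empty_of_forall_notMem (fun γ hγ => hS.false (γ.1 ⟨0, by omega⟩))
    rw [he]; simp
  rcases isEmpty_or_nonempty T with hT | hT
  · have he : AFin (k' + 2) Rel p = ∅ :=
      Finset.eq_empty_of_forall_notMem (fun γ hγ => hT.false (γ.2 ⟨0, by omega⟩))
    rw [he]; simp
  obtain ⟨dS⟩ := hS
  obtain ⟨dT⟩ := hT
  set P1 := p1.val with hP1v
  set Q1 := q1.val with hQ1v
  set P2 := p2.val with hP2v
  set Q2 := q2.val with hQ2v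
  have h4N : Q2 < 2 * (k' + 2) := q2.isLt
  set Ltot := 2 * (k' + 2) - 4 with hLtot
  set A := AFin (k' + 2) Rel p with hA
  set vt : ℕ → ℕ := fun i => vtxF P1 Q1 P2 Q2 (2 * (k' + 2)) i with hvt
  set edg : ℕ → ℕ := fun i => edgF P1 Q1 P2 Q2 (2 * (k' + 2)) i with hedg
  set nr : ℕ → ℕ := fun i => nearF P1 Q1 P2 Q2 (2 * (k' + 2)) i with hnr
  set pe : ℕ → ℕ := fun i => liftN P1 (2 * (k' + 2)) ((pr (ePosF k' (edg i))).val) with hpe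
  set D0 : Finset (Fin (k' + 2) ⊕ Fin (k' + 2)) :=
    {wvF k' P1, wvF k' (P1 + 1), wvF k' P2, wvF k' (P2 + 1)} with hD0
  set Ds : ℕ → Finset (Fin (k' + 2) ⊕ Fin (k' + 2)) :=
    fun tt => D0 ∪ (Finset.range tt).image (fun i => wvF k' (vt i)) with hDs
  set NS := Fintype.card S + Fintype.card T with hNS
  set Fc : ℕ → ℕ := fun tt =>
    ((Finset.range tt).filter (fun i => ¬ ∃ i', i' < i ∧ edg i' = pe i)).card with hFcd
  -- basic window facts
  have hwin : ∀ t, t < Ltot → P1 + 2 ≤ vt t ∧ vt t ≤ P1 + 2 * (k' + 2) - 1 ∧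
      vt t ≠ P1 + 1 ∧ vt t ≠ P2 ∧ vt t ≠ P2 + 1 := by
    intro t ht
    simp only [hvt]
    exact vtx_range h12 h23 h34 h4N (by omega)
  have hvinj : ∀ t t', t < Ltot → t' < Ltot → t ≠ t' → vt t ≠ vt t' := by
    intro t t' ht ht' hne
    simp only [hvt]
    exact vtx_inj h12 h23 h34 h4N (by omega) (by omega) hne
  have hedgw : ∀ t, t < Ltot → P1 + 1 ≤ edg t ∧ edg t ≤ P1 + 2 * (k' + 2) - 1 ∧
      edg t ≠ Q1 ∧ edg t ≠ P2 ∧ edg t ≠ Q2 := by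
    intro t ht
    simp only [hedg]
    exact edg_range h12 h23 h34 h4N (by omega)
  have hedginj : ∀ t t', t < Ltot → t' < Ltot → t ≠ t' → edg t ≠ edg t' := by
    intro t t' ht ht' hne
    simp only [hedg]
    exact edg_inj h12 h23 h34 h4N (by omega) (by omega) hne
  -- membership facts about Ds
  have hDmono : ∀ a b : ℕ, a ≤ b → Ds a ⊆ Ds b := by
    intro a b hab
    simp only [hDs]
    exact Finset.union_subset_union (Finset.Subset.refl _)
      (Finset.image_subset_image (Finset.range_subset_range.mpr hab))
  have hvmem : ∀ i t : ℕ, i < t → wvF k' (vt i) ∈ Ds t := by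
    intro i t hit
    simp only [hDs]
    exact Finset.mem_union_right _ (Finset.mem_image.mpr ⟨i, Finset.mem_range.mpr hit, rfl⟩)
  have hD0mem : ∀ t : ℕ, ∀ j ∈ ({P1, P1 + 1, P2, P2 + 1} : Finset ℕ), wvF k' j ∈ Ds t := by
    intro t j hj
    simp only [hDs]
    refine Finset.mem_union_left _ ?_
    simp only [hD0, Finset.mem_insert, Finset.mem_singleton]
    simp only [Finset.mem_insert, Finset.mem_singleton] at hj
    rcases hj with rfl | rfl | rfl | rfl
    · left; rfl
    · right; left; rfl
    · right; right; left; rfl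
    · right; right; right; rfl
  have hfresh : ∀ t, t < Ltot → wvF k' (vt t) ∉ Ds t := by
    intro t ht hmem
    have hw := hwin t ht
    simp only [hDs, hD0, Finset.mem_union, Finset.mem_insert, Finset.mem_singleton,
      Finset.mem_image, Finset.mem_range] at hmem
    rcases hmem with (h | h | h | h) | ⟨i, hi, h⟩
    · have := wvF_inj k' (c := P1) (by omega) (by omega) (le_refl P1) (by omega) h
      omega
    · have := wvF_inj k' (c := P1) (by omega) (by omega) (by omega) (by omega) h
      omega
    · have := wvF_inj k' (c := P1) (by omega) (by omega) (by omega) (by omega) h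
      omega
    · have := wvF_inj k' (c := P1) (by omega) (by omega) (by omega) (by omega) h
      omega
    · have hwi := hwin i (by omega)
      have := wvF_inj k' (c := P1) (by omega) (by omega) (by omega) (by omega) h
      have := hvinj i t (by omega) ht (by omega)
      omega
  have hnearmem : ∀ t, t < Ltot → wvF k' (nr t) ∈ Ds t := by
    intro t ht
    have hc : nr t = P1 + 1 ∨ nr t = P2 ∨ nr t = P2 + 1 ∨ nr t = P1 + 2 * (k' + 2) ∨
        (0 < t ∧ vt (t - 1) = nr t) := by
      simp only [hnr, hvt]
      exact near_cases h12 h23 h34 h4N (by omega)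
    rcases hc with h | h | h | h | ⟨h0, h⟩
    · rw [h]; exact hD0mem t _ (by simp)
    · rw [h]; exact hD0mem t _ (by simp)
    · rw [h]; exact hD0mem t _ (by simp)
    · rw [h, show P1 + 2 * (k' + 2) = P1 + 2 * (k' + 2) from rfl, wvF_period k' P1]
      exact hD0mem t _ (by simp)
    · rw [← h]
      exact hvmem (t - 1) t (by omega)
  have hends : ∀ t, t < Ltot →
      (edg t = vt t ∧ edg t + 1 = nr t) ∨ (edg t = nr t ∧ edg t + 1 = vt t) := by
    intro t ht
    simp only [hedg, hvt, hnr]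
    exact edg_endpoints h12 h23 h34 h4N (by omega)
  have htravc : ∀ i t : ℕ, i < t → t ≤ Ltot →
      wvF k' (edg i) ∈ Ds t ∧ wvF k' (edg i + 1) ∈ Ds t := by
    intro i t hit htl
    have hi : i < Ltot := by omega
    rcases hends i hi with ⟨h1, h2⟩ | ⟨h1, h2⟩
    · exact ⟨h1 ▸ hvmem i t hit, h2 ▸ (hDmono i t (by omega) (hnearmem i hi))⟩
    · exact ⟨h1 ▸ (hDmono i t (by omega) (hnearmem i hi)), h2 ▸ hvmem i t hit⟩
  have hpp' : pr p2 = p1 := by rw [← hpp, hprI]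
  have hqq' : pr q2 = q1 := by rw [← hqq, hprI]
  -- the partner edge lies in the traversable window
  have hpew : ∀ t, t < Ltot → P1 + 1 ≤ pe t ∧ pe t ≤ P1 + 2 * (k' + 2) - 1 ∧
      pe t ≠ Q1 ∧ pe t ≠ P2 ∧ pe t ≠ Q2 ∧ ePosF k' (pe t) = pr (ePosF k' (edg t)) ∧
      pe t ≠ edg t := by
    intro t ht
    have hew := hedgw t ht
    have heP : ePosF k' (pe t) = pr (ePosF k' (edg t)) := by
      simp only [hpe]
      exact ePos_lift k' P1 _
    have hle : liftN P1 (2 * (k' + 2)) (ePosF k' (edg t)).val = edg t :=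
      lift_ePos k' P1 (by omega) (by omega) (by omega)
    have hvalbound : (ePosF k' (edg t)).val ≠ P1 ∧ (ePosF k' (edg t)).val ≠ Q1 ∧
        (ePosF k' (edg t)).val ≠ P2 ∧ (ePosF k' (edg t)).val ≠ Q2 := by
      have hlt := (ePosF k' (edg t)).isLt
      simp only [liftN] at hle
      split_ifs at hle <;> omega
    have key : ∀ z w : Fin (2 * (k' + 2)), pr z = w →
        pr (ePosF k' (edg t)) = z → (ePosF k' (edg t)).val = w.val := by
      intro z w hzw hx
      have : ePosF k' (edg t) = pr z := by rw [← hx, hprI]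
      rw [hzw] at this
      rw [this]
    have hprx : (pr (ePosF k' (edg t))).val ≠ P1 ∧ (pr (ePosF k' (edg t))).val ≠ Q1 ∧
        (pr (ePosF k' (edg t))).val ≠ P2 ∧ (pr (ePosF k' (edg t))).val ≠ Q2 := by
      refine ⟨fun hval => ?_, fun hval => ?_, fun hval => ?_, fun hval => ?_⟩
      · exact hvalbound.2.2.1 (key p1 p2 hpp (Fin.ext hval))
      · exact hvalbound.2.2.2 (key q1 q2 hqq (Fin.ext hval))
      · exact hvalbound.1 (key p2 p1 hpp' (Fin.ext hval))
      · exact hvalbound.2.1 (key q2 q1 hqq' (Fin.ext hval))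
    have hprlt := (pr (ePosF k' (edg t))).isLt
    have hne : pe t ≠ edg t := by
      intro hcontra
      have : ePosF k' (pe t) = ePosF k' (edg t) := by rw [hcontra]
      rw [heP] at this
      exact hpr2 _ this
    refine ⟨?_, ?_, ?_, ?_, ?_, heP, hne⟩ <;>
      · simp only [hpe, liftN]
        split_ifs <;> omega
  -- every traversed edge has a partner somewhere in the schedule
  have hpartner : ∀ t, t < Ltot → ∃ j, j < Ltot ∧ edg j = pe t := by
    intro t ht
    have hw := hpew t ht
    have := edg_surj h12 h23 h34 h4N (e := pe t) (by omega) (by omega)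
      hw.2.2.1 hw.2.2.2.1 hw.2.2.2.2.1
    obtain ⟨j, hj1, hj2⟩ := this
    refine ⟨j, by omega, ?_⟩
    simp only [hedg]
    exact hj2
  -- pe is involutive on the schedule
  have hpepe : ∀ t j, t < Ltot → j < Ltot → edg j = pe t → edg t = pe j := by
    intro t j ht hj hedge
    have hwt := hpew t ht
    have hwj := hpew j hj
    have h1 : ePosF k' (edg j) = pr (ePosF k' (edg t)) := by
      rw [hedge]; exact hwt.2.2.2.2.2.1
    have h2 : ePosF k' (pe j) = ePosF k' (edg t) := by
      rw [hwj.2.2.2.2.2.1, h1, hprI]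
    have hewt := hedgw t ht
    have hewj := hedgw j hj
    have e1 : liftN P1 (2 * (k' + 2)) (ePosF k' (pe j)).val = pe j :=
      lift_ePos k' P1 (by omega) (by omega) (by omega)
    have e2 : liftN P1 (2 * (k' + 2)) (ePosF k' (edg t)).val = edg t :=
      lift_ePos k' P1 (by omega) (by omega) (by omega)
    rw [← e2, ← h2, e1]
  -- the number of free steps is at most k'
  have hFcount : Fc Ltot ≤ k' := by
    have hex : ∀ t, ∃ j, t < Ltot → (j < Ltot ∧ edg j = pe t) := by
      intro t
      by_cases ht : t < Ltot
      · obtain ⟨j, hj⟩ := hpartner t ht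
        exact ⟨j, fun _ => hj⟩
      · exact ⟨0, fun h => absurd h ht⟩
    choose st hst using hex
    set F := (Finset.range Ltot).filter (fun i => ¬ ∃ i', i' < i ∧ edg i' = pe i) with hF
    have hFsub : F ⊆ Finset.range Ltot := Finset.filter_subset _ _
    have hcard : F.card ≤ (Finset.range Ltot \ F).card := by
      refine Finset.card_le_card_of_injOn st ?_ ?_
      · intro t htF
        have htmem := Finset.mem_filter.mp htF
        have htR := Finset.mem_range.mp htmem.1
        obtain ⟨hstl, hste⟩ := hst t htR
        have htlt : t < st t := by
          rcases Nat.lt_trichotomy t (st t) with h | h | h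
          · exact h
          · exfalso
            have het : edg t = pe t := by rw [← h] at hste; exact hste
            have hthis := (hpew t htR).2.2.2.2.2.1
            apply hpr2 (ePosF k' (edg t))
            rw [← hthis, ← het]
          · exact absurd ⟨st t, h, hste⟩ htmem.2
        refine Finset.mem_sdiff.mpr ⟨Finset.mem_range.mpr hstl, fun hmem => ?_⟩
        have := (Finset.mem_filter.mp hmem).2
        exact this ⟨t, htlt, hpepe t (st t) htR hstl hste⟩
      · intro t1 h1 t2 h2 heq
        have ht1 := Finset.mem_range.mp (Finset.mem_filter.mp (Finset.mem_coe.mp h1)).1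
        have ht2 := Finset.mem_range.mp (Finset.mem_filter.mp (Finset.mem_coe.mp h2)).1
        obtain ⟨hl1, he1⟩ := hst t1 ht1
        obtain ⟨hl2, he2⟩ := hst t2 ht2
        have : pe t1 = pe t2 := by rw [← he1, ← he2, heq]
        have hP : ePosF k' (edg t1) = ePosF k' (edg t2) := by
          have a1 := (hpew t1 ht1).2.2.2.2.2.1
          have a2 := (hpew t2 ht2).2.2.2.2.2.1
          have : ePosF k' (pe t1) = ePosF k' (pe t2) := by rw [this]
          rw [a1, a2] at this
          have := congrArg pr this
          rwa [hprI, hprI] at this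
        have hE : edg t1 = edg t2 := by
          have b1 := hedgw t1 ht1
          have b2 := hedgw t2 ht2
          have c1 := lift_ePos k' P1 (by omega) (e := edg t1) (by omega) (by omega)
          have c2 := lift_ePos k' P1 (by omega) (e := edg t2) (by omega) (by omega)
          rw [← c1, ← c2, hP]
        by_contra hne
        exact hedginj t1 t2 ht1 ht2 hne hE
    have hsd : (Finset.range Ltot \ F).card = Ltot - F.card := by
      rw [Finset.card_sdiff_of_subset hFsub, Finset.card_range]
    simp only [hFcd]
    rw [← hF]  -- Fc Ltot is the card of F
    omega
  have hDsucc : ∀ t : ℕ, Ds (t + 1) = insert (wvF k' (vt t)) (Ds t) := by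
    intro t
    simp only [hDs, Finset.range_add_one, Finset.image_insert, Finset.union_insert]
  have hrelAt : ∀ t, t < Ltot → ∀ γ ∈ A, Rel.r (γ.1 (avsF k' (pe t)), γ.2 (bvsF k' (pe t)))
      (γ.1 (avsF k' (edg t)), γ.2 (bvsF k' (edg t))) := by
    intro t ht γ hγ
    have hcond := mem_AFin.mp hγ
    have hr : p.r (ePosF k' (pe t)) (ePosF k' (edg t)) := by
      rw [(hpew t ht).2.2.2.2.2.1]
      exact p.iseqv.symm (hpr1 _)
    have hthis := hcond _ _ hr
    rwa [PT_vars, PT_vars] at hthis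
  have closed_step : ∀ t, t < Ltot → (∃ i', i' < t ∧ edg i' = pe t) →
      (A.image (rho dS dT (Ds (t + 1)))).card ≤ B * (A.image (rho dS dT (Ds t))).card := by
    intro t ht hcl
    obtain ⟨i', hi't, hi'e⟩ := hcl
    have hpc := htravc i' t hi't (le_of_lt ht)
    rw [hi'e] at hpc
    have hpa : Sum.inl (avsF k' (pe t)) ∈ Ds t ∧ Sum.inr (bvsF k' (pe t)) ∈ Ds t := by
      rcases edge_vars k' (pe t) with ⟨hw1, hw2⟩ | ⟨hw1, hw2⟩
      · exact ⟨hw2 ▸ hpc.2, hw1 ▸ hpc.1⟩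
      · exact ⟨hw1 ▸ hpc.1, hw2 ▸ hpc.2⟩
    have hnrD : wvF k' (nr t) ∈ Ds t := hnearmem t ht
    rw [hDsucc t]
    rcases hends t ht with ⟨h1, h2⟩ | ⟨h1, h2⟩
    · rw [← h1]
      rcases edge_vars k' (edg t) with ⟨hw1, hw2⟩ | ⟨hw1, hw2⟩
      · rw [hw1]
        refine step_closed_b dS dT Rel B hB A (Ds t) (avsF k' (edg t)) (bvsF k' (edg t))
          (avsF k' (pe t)) (bvsF k' (pe t)) (hrelAt t ht) hpa.1 hpa.2 ?_
        rw [← h2] at hnrD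
        rw [← hw2]
        exact hnrD
      · rw [hw1]
        refine step_closed_a dS dT Rel B hB' A (Ds t) (avsF k' (edg t)) (bvsF k' (edg t))
          (avsF k' (pe t)) (bvsF k' (pe t)) (hrelAt t ht) hpa.1 hpa.2 ?_
        rw [← h2] at hnrD
        rw [← hw2]
        exact hnrD
    · rw [← h2]
      rcases edge_vars k' (edg t) with ⟨hw1, hw2⟩ | ⟨hw1, hw2⟩
      · rw [hw2]
        refine step_closed_a dS dT Rel B hB' A (Ds t) (avsF k' (edg t)) (bvsF k' (edg t))
          (avsF k' (pe t)) (bvsF k' (pe t)) (hrelAt t ht) hpa.1 hpa.2 ?_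
        rw [← h1] at hnrD
        rw [← hw1]
        exact hnrD
      · rw [hw2]
        refine step_closed_b dS dT Rel B hB A (Ds t) (avsF k' (edg t)) (bvsF k' (edg t))
          (avsF k' (pe t)) (bvsF k' (pe t)) (hrelAt t ht) hpa.1 hpa.2 ?_
        rw [← h1] at hnrD
        rw [← hw1]
        exact hnrD
  -- the chain of estimates
  have hchain : ∀ tt, tt ≤ Ltot →
      (A.image (rho dS dT (Ds tt))).card ≤
        (B + 1) ^ tt * NS ^ (Fc tt) * (A.image (rho dS dT (Ds 0))).card := by
    intro tt
    induction tt with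
    | zero =>
      intro _
      simp [hFcd]
    | succ t ih =>
      intro htt
      have ht : t < Ltot := by omega
      have iht := ih (by omega)
      by_cases hcl : ∃ i', i' < t ∧ edg i' = pe t
      · have hstep := closed_step t ht hcl
        have hFeq : Fc (t + 1) = Fc t := by
          simp only [hFcd, Finset.range_add_one, Finset.filter_insert]
          rw [if_neg (not_not_intro hcl)]
        calc (A.image (rho dS dT (Ds (t + 1)))).card
            ≤ B * (A.image (rho dS dT (Ds t))).card := hstep
          _ ≤ B * ((B + 1) ^ t * NS ^ (Fc t) * (A.image (rho dS dT (Ds 0))).card) :=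
              Nat.mul_le_mul (le_refl B) iht
          _ ≤ (B + 1) * ((B + 1) ^ t * NS ^ (Fc t) * (A.image (rho dS dT (Ds 0))).card) :=
              Nat.mul_le_mul (by omega) (le_refl _)
          _ = (B + 1) ^ (t + 1) * NS ^ (Fc (t + 1)) * (A.image (rho dS dT (Ds 0))).card := by
              rw [hFeq]; ring
      · have hstep : (A.image (rho dS dT (Ds (t + 1)))).card ≤
            NS * (A.image (rho dS dT (Ds t))).card := by
          rw [hDsucc t, hNS]
          exact step_free dS dT A (Ds t) _
        have hFeq : Fc (t + 1) = Fc t + 1 := by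
          simp only [hFcd, Finset.range_add_one, Finset.filter_insert]
          rw [if_pos hcl]
          rw [Finset.card_insert_of_notMem (fun hmem =>
            absurd (Finset.mem_range.mp (Finset.mem_filter.mp hmem).1) (lt_irrefl t))]
        calc (A.image (rho dS dT (Ds (t + 1)))).card
            ≤ NS * (A.image (rho dS dT (Ds t))).card := hstep
          _ ≤ NS * ((B + 1) ^ t * NS ^ (Fc t) * (A.image (rho dS dT (Ds 0))).card) :=
              Nat.mul_le_mul (le_refl NS) iht
          _ = (B + 1) ^ t * NS ^ (Fc t + 1) * (A.image (rho dS dT (Ds 0))).card := by ring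
          _ ≤ (B + 1) ^ (t + 1) * NS ^ (Fc (t + 1)) * (A.image (rho dS dT (Ds 0))).card := by
              rw [hFeq]
              exact Nat.mul_le_mul (Nat.mul_le_mul
                (Nat.pow_le_pow_right (by omega) (Nat.le_succ t)) (le_refl _)) (le_refl _)
  -- at the end everything is determined
  have hDfull : Ds Ltot = Finset.univ := by
    refine Finset.eq_univ_of_forall (fun v => ?_)
    obtain ⟨j, hj1, hj2, hjv⟩ := wvF_surj k' P1 v
    rw [← hjv]
    by_cases hj : j = P1 ∨ j = P1 + 1 ∨ j = P2 ∨ j = P2 + 1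
    · refine hD0mem Ltot j ?_
      rcases hj with rfl | rfl | rfl | rfl <;> simp
    · push_neg at hj
      obtain ⟨t, htl, hte⟩ := vtx_surj h12 h23 h34 h4N (v := j) (by omega) (by omega)
        (by omega) (by omega)
      have hvtj : vt t = j := hte
      rw [← hvtj]
      exact hvmem t Ltot (by omega)
  have hAeq : (A.image (rho dS dT (Ds Ltot))).card = A.card := by
    rw [hDfull]
    have himid : A.image (rho dS dT Finset.univ) = A.image id :=
      Finset.image_congr (fun γ _ => rho_univ dS dT γ)
    rw [himid, Finset.image_id]
  -- the base estimate via (MP1)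
  have heqP1 : ePosF k' P1 = p1 := Fin.ext (Nat.mod_eq_of_lt p1.isLt)
  have heqP2 : ePosF k' P2 = p2 := Fin.ext (Nat.mod_eq_of_lt p2.isLt)
  have hedgeD0 : ∀ e : ℕ, e = P1 ∨ e = P2 →
      Sum.inl (avsF k' e) ∈ D0 ∧ Sum.inr (bvsF k' e) ∈ D0 := by
    intro e he
    have hmm : wvF k' e ∈ D0 ∧ wvF k' (e + 1) ∈ D0 := by
      rcases he with rfl | rfl
      · constructor
        · simp [hD0]
        · simp [hD0]
      · constructor
        · simp [hD0]
        · simp [hD0]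
    rcases edge_vars k' e with ⟨hw1, hw2⟩ | ⟨hw1, hw2⟩
    · exact ⟨hw2 ▸ hmm.2, hw1 ▸ hmm.1⟩
    · exact ⟨hw1 ▸ hmm.1, hw2 ▸ hmm.2⟩
  have hQ0 : (A.image (rho dS dT (Ds 0))).card ≤
      {x : (S × T) × (S × T) | Rel.r x.1 x.2}.ncard := by
    have hDs0 : Ds 0 = D0 := by simp [hDs]
    rw [hDs0, Set.ncard_eq_toFinset_card _ (Set.toFinite _)]
    refine Finset.card_le_card_of_injOn
      (fun x => (PTmap x (ePosF k' P1), PTmap x (ePosF k' P2))) ?_ ?_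
    · intro x hx
      obtain ⟨γ, hγA, rfl⟩ := Finset.mem_image.mp hx
      refine (Set.Finite.mem_toFinset _).mpr ?_
      have h1 := hedgeD0 P1 (Or.inl rfl)
      have h2 := hedgeD0 P2 (Or.inr rfl)
      have e1 : PTmap (rho dS dT D0 γ) (ePosF k' P1) = PTmap γ (ePosF k' P1) := by
        rw [PT_vars, PT_vars]
        exact Prod.ext (rho_mem_fst dS dT γ h1.1) (rho_mem_snd dS dT γ h1.2)
      have e2 : PTmap (rho dS dT D0 γ) (ePosF k' P2) = PTmap γ (ePosF k' P2) := by
        rw [PT_vars, PT_vars]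
        exact Prod.ext (rho_mem_fst dS dT γ h2.1) (rho_mem_snd dS dT γ h2.2)
      show Rel.r (PTmap (rho dS dT D0 γ) (ePosF k' P1)) (PTmap (rho dS dT D0 γ) (ePosF k' P2))
      rw [e1, e2, heqP1, heqP2]
      exact mem_AFin.mp hγA _ _ (hpp ▸ hpr1 p1)
    · intro x hx x' hx' hval
      have hx1 := Finset.mem_coe.mp hx
      have hx1' := Finset.mem_coe.mp hx'
      have e1 : PTmap x (ePosF k' P1) = PTmap x' (ePosF k' P1) := congrArg Prod.fst hval
      have e2 : PTmap x (ePosF k' P2) = PTmap x' (ePosF k' P2) := congrArg Prod.snd hval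
      rw [PT_vars, PT_vars] at e1 e2
      have ea1 : x.1 (avsF k' P1) = x'.1 (avsF k' P1) := congrArg Prod.fst e1
      have eb1 : x.2 (bvsF k' P1) = x'.2 (bvsF k' P1) := congrArg Prod.snd e1
      have ea2 : x.1 (avsF k' P2) = x'.1 (avsF k' P2) := congrArg Prod.fst e2
      have eb2 : x.2 (bvsF k' P2) = x'.2 (bvsF k' P2) := congrArg Prod.snd e2
      refine rho_ext dS dT hx1 hx1' (fun v hv => ?_)
      simp only [hD0, Finset.mem_insert, Finset.mem_singleton] at hv
      rcases hv with rfl | rfl | rfl | rfl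
      · rcases edge_vars k' P1 with ⟨hw1, _⟩ | ⟨hw1, _⟩ <;> rw [hw1] <;>
          simp [getv, ea1, eb1]
      · rcases edge_vars k' P1 with ⟨_, hw2⟩ | ⟨_, hw2⟩ <;> rw [hw2] <;>
          simp [getv, ea1, eb1]
      · rcases edge_vars k' P2 with ⟨hw1, _⟩ | ⟨hw1, _⟩ <;> rw [hw1] <;>
          simp [getv, ea2, eb2]
      · rcases edge_vars k' P2 with ⟨_, hw2⟩ | ⟨_, hw2⟩ <;> rw [hw2] <;>
          simp [getv, ea2, eb2]
  -- assemble
  have hNS1 : 1 ≤ NS := by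
    have hcS : 0 < Fintype.card S := @Fintype.card_pos S _ ⟨dS⟩
    omega
  calc A.card = (A.image (rho dS dT (Ds Ltot))).card := hAeq.symm
    _ ≤ (B + 1) ^ Ltot * NS ^ (Fc Ltot) * (A.image (rho dS dT (Ds 0))).card :=
        hchain Ltot (le_refl _)
    _ ≤ (B + 1) ^ (2 * (k' + 2)) * NS ^ k' *
        {x : (S × T) × (S × T) | Rel.r x.1 x.2}.ncard := by
        refine Nat.mul_le_mul (Nat.mul_le_mul ?_ ?_) hQ0
        · exact Nat.pow_le_pow_right (by omega) (by omega)
        · exact Nat.pow_le_pow_right hNS1 hFcount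

/-- summing (MP1)-type fibers bounds the number of related quadruples -/
lemma quad_bound {S T : Type*} [Fintype S] [Fintype T] [DecidableEq S] [DecidableEq T]
    (Rel : Setoid (S × T)) :
    {x : (S × T) × (S × T) | Rel.r x.1 x.2}.ncard ≤
      Fintype.card S * (Finset.univ.sup
        (fun a : S => {x : T × S × T | Rel.r (a, x.1) (x.2.1, x.2.2)}.ncard)) := by
  classical
  rw [Set.ncard_eq_toFinset_card _ (Set.toFinite _)]
  rw [Finset.card_eq_sum_card_fiberwise
    (f := fun x : (S × T) × (S × T) => x.1.1) (t := Finset.univ)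
    (fun x _ => Finset.mem_univ _)]
  calc ∑ a ∈ Finset.univ, ((Set.toFinite {x : (S × T) × (S × T) | Rel.r x.1 x.2}).toFinset.filter
        (fun x => x.1.1 = a)).card
      ≤ ∑ a ∈ (Finset.univ : Finset S), (Finset.univ.sup
        (fun a : S => {x : T × S × T | Rel.r (a, x.1) (x.2.1, x.2.2)}.ncard)) := by
        refine Finset.sum_le_sum (fun a _ => ?_)
        have hle : ((Set.toFinite {x : (S × T) × (S × T) | Rel.r x.1 x.2}).toFinset.filter
            (fun x => x.1.1 = a)).card ≤ {x : T × S × T | Rel.r (a, x.1) (x.2.1, x.2.2)}.ncard := by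
          rw [Set.ncard_eq_toFinset_card _ (Set.toFinite _)]
          refine Finset.card_le_card_of_injOn (fun x => (x.1.2, x.2.1, x.2.2)) ?_ ?_
          · intro x hx
            have hx' := Finset.mem_filter.mp hx
            have hrel := (Set.Finite.mem_toFinset _).mp hx'.1
            refine (Set.Finite.mem_toFinset _).mpr ?_
            show Rel.r (a, x.1.2) (x.2.1, x.2.2)
            have : x.1 = (a, x.1.2) := by
              rw [← hx'.2]
            rw [← this]
            have : x.2 = (x.2.1, x.2.2) := rfl
            rw [← this]
            exact hrel
          · intro x hx x' hx' heq
            have h1 := (Finset.mem_filter.mp (Finset.mem_coe.mp hx)).2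
            have h2 := (Finset.mem_filter.mp (Finset.mem_coe.mp hx')).2
            simp only [Prod.mk.injEq] at heq
            have hx1 : x.1 = x'.1 := by
              have : x.1 = (a, x.1.2) := by rw [← h1]
              have h' : x'.1 = (a, x'.1.2) := by rw [← h2]
              rw [this, h', heq.1]
            have hx2 : x.2 = x'.2 := by
              have : x.2 = (x.2.1, x.2.2) := rfl
              rw [this, heq.2.1, heq.2.2]
            exact Prod.ext hx1 hx2
        exact le_trans hle (Finset.le_sup
          (f := fun a : S => {x : T × S × T | Rel.r (a, x.1) (x.2.1, x.2.2)}.ncard)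
          (Finset.mem_univ a))
    _ = Fintype.card S * (Finset.univ.sup
        (fun a : S => {x : T × S × T | Rel.r (a, x.1) (x.2.1, x.2.2)}.ncard)) := by
        rw [Finset.sum_const, Finset.card_univ, smul_eq_mul]
end CPPaux

open Filter

/-- If `p` is a crossing pair partition of `{1,…,2k}`, then under (MP1), (MP2), (MP3),
`#S_n(p) = o(n^{k+1})`, where `S_n(p)` is the set of pairs `(φ,ψ)` with `φ` constant on
blocks of `m`, `ψ` constant on blocks of `n`, and
`(φ(i),ψ(i)) ~_n (φ(j),ψ(j)) ↔ i ~_p j`. -/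
theorem crossing_pair_partition_count_small (k : ℕ) (hk : 1 ≤ k) (κ μ : ℝ)
    (hκ : 0 < κ) (hμ : 0 < μ)
    (s t : ℕ → ℕ) (R : ∀ n, Setoid (Fin (s n) × Fin (t n)))
    (hs : Tendsto (fun n => (s n : ℝ) / n) atTop (nhds κ))
    (ht : Tendsto (fun n => (t n : ℝ) / n) atTop (nhds μ))
    -- (MP1)
    (hMP1 : Tendsto (fun n =>
        ((Finset.univ.sup (fun a : Fin (s n) =>
            {x : Fin (t n) × Fin (s n) × Fin (t n) |
              (R n).r (a, x.1) (x.2.1, x.2.2)}.ncard) : ℕ) : ℝ) / (n : ℝ) ^ 2)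
        atTop (nhds 0))
    -- (MP2)
    (B : ℕ)
    (hMP2 : ∀ n (a : Fin (s n)) (q : Fin (t n)) (a' : Fin (s n)),
        {q' : Fin (t n) | (R n).r (a, q) (a', q')}.ncard ≤ B)
    (hMP2' : ∀ n (a : Fin (s n)) (q q' : Fin (t n)),
        {a' : Fin (s n) | (R n).r (a, q) (a', q')}.ncard ≤ B)
    -- (MP3)
    (hMP3 : Tendsto (fun n =>
        ({x : Fin (s n) × Fin (t n) × Fin (t n) |
            x.2.1 ≠ x.2.2 ∧ (R n).r (x.1, x.2.1) (x.1, x.2.2)}.ncard : ℝ) / (n : ℝ) ^ 2)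
        atTop (nhds 0))
    (hMP3' : Tendsto (fun n =>
        ({x : Fin (s n) × Fin (s n) × Fin (t n) |
            x.1 ≠ x.2.1 ∧ (R n).r (x.1, x.2.2) (x.2.1, x.2.2)}.ncard : ℝ) / (n : ℝ) ^ 2)
        atTop (nhds 0))
    (p : Setoid (Fin (2 * k))) (hpair : IsPairPartition p)
    (hcross : ¬ IsNoncrossing p) :
    Tendsto (fun n =>
      ({fp : (Fin (2 * k) → Fin (s n)) × (Fin (2 * k) → Fin (t n)) |
          (∀ i j, (mSetoid k).r i j → fp.1 i = fp.1 j) ∧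
          (∀ i j, (nSetoid k).r i j → fp.2 i = fp.2 j) ∧
          (∀ i j, ((R n).r (fp.1 i, fp.2 i) (fp.1 j, fp.2 j) ↔ p.r i j))}.ncard : ℝ)
        / (n : ℝ) ^ (k + 1)) atTop (nhds 0) := by
  classical
  obtain ⟨c1, c2, c3, c4, hc12, hc23, hc34, hr1, hr2, -⟩ := not_not.mp hcross
  have hv12 : c1.val < c2.val := hc12
  have hv23 : c2.val < c3.val := hc23
  have hv34 : c3.val < c4.val := hc34
  have hk2 : 2 ≤ k := by have := c4.isLt; omega
  obtain ⟨k', rfl⟩ : ∃ k', k = k' + 2 := ⟨k - 2, by omega⟩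
  obtain ⟨pr, hpr1, hpr2, hpr3⟩ := CPPaux.exists_pairing p hpair
  have hprI : ∀ x, pr (pr x) = x := by
    intro x
    rcases hpr3 (pr x) x (p.iseqv.symm (hpr1 x)) with h | h
    · exact absurd h.symm (hpr2 x)
    · exact h.symm
  have hpp : pr c1 = c3 := by
    rcases hpr3 c1 c3 hr1 with h | h
    · exfalso
      have hlt : c1.val < c3.val := by omega
      rw [h] at hlt
      exact lt_irrefl _ hlt
    · exact h.symm
  have hqq : pr c2 = c4 := by
    rcases hpr3 c2 c4 hr2 with h | h
    · exfalso
      have hlt : c2.val < c4.val := by omega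
      rw [h] at hlt
      exact lt_irrefl _ hlt
    · exact h.symm
  set supM : ℕ → ℕ := fun n => Finset.univ.sup (fun a : Fin (s n) =>
    {x : Fin (t n) × Fin (s n) × Fin (t n) |
      (R n).r (a, x.1) (x.2.1, x.2.2)}.ncard) with hsupM
  -- the counting estimate for each n
  have key : ∀ n, ({fp : (Fin (2 * (k' + 2)) → Fin (s n)) × (Fin (2 * (k' + 2)) → Fin (t n)) |
      (∀ i j, (mSetoid (k' + 2)).r i j → fp.1 i = fp.1 j) ∧
      (∀ i j, (nSetoid (k' + 2)).r i j → fp.2 i = fp.2 j) ∧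
      (∀ i j, ((R n).r (fp.1 i, fp.2 i) (fp.1 j, fp.2 j) ↔ p.r i j))}.ncard) ≤
      (B + 1) ^ (2 * (k' + 2)) * (s n + t n) ^ k' * (s n * supM n) := by
    intro n
    -- recovery of a function constant on blocks from its block values
    have hrec1 : ∀ (fp : (Fin (2 * (k' + 2)) → Fin (s n)) × (Fin (2 * (k' + 2)) → Fin (t n))),
        (∀ i j, (mSetoid (k' + 2)).r i j → fp.1 i = fp.1 j) →
        ∀ j : Fin (2 * (k' + 2)),
          fp.1 j = fp.1 ⟨2 * (j.val / 2), by have := j.isLt; omega⟩ := by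
      intro fp hm j
      refine hm j _ ?_
      show j.val / 2 = (2 * (j.val / 2)) / 2
      omega
    have hrec2 : ∀ (fp : (Fin (2 * (k' + 2)) → Fin (s n)) × (Fin (2 * (k' + 2)) → Fin (t n))),
        (∀ i j, (nSetoid (k' + 2)).r i j → fp.2 i = fp.2 j) →
        ∀ j : Fin (2 * (k' + 2)),
          fp.2 j = fp.2 ⟨2 * ((j.val + 1) / 2 % (k' + 2)),
            by have := Nat.mod_lt ((j.val + 1) / 2) (y := k' + 2) (by omega); omega⟩ := by
      intro fp hn j
      refine hn j _ ?_
      show (j.val + 1) / 2 % (k' + 2) = (2 * ((j.val + 1) / 2 % (k' + 2)) + 1) / 2 % (k' + 2)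
      have hmlt : (j.val + 1) / 2 % (k' + 2) < k' + 2 := Nat.mod_lt _ (by omega)
      rw [show (2 * ((j.val + 1) / 2 % (k' + 2)) + 1) / 2 = (j.val + 1) / 2 % (k' + 2) by omega,
        Nat.mod_eq_of_lt hmlt]
    have hstep1 : ({fp : (Fin (2 * (k' + 2)) → Fin (s n)) × (Fin (2 * (k' + 2)) → Fin (t n)) |
        (∀ i j, (mSetoid (k' + 2)).r i j → fp.1 i = fp.1 j) ∧
        (∀ i j, (nSetoid (k' + 2)).r i j → fp.2 i = fp.2 j) ∧
        (∀ i j, ((R n).r (fp.1 i, fp.2 i) (fp.1 j, fp.2 j) ↔ p.r i j))}.ncard) ≤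
        (CPPaux.AFin (k' + 2) (R n) p).card := by
      rw [Set.ncard_eq_toFinset_card _ (Set.toFinite _)]
      refine Finset.card_le_card_of_injOn
        (fun fp => ((fun i : Fin (k' + 2) => fp.1 ⟨2 * i.val, by have := i.isLt; omega⟩),
                    (fun i : Fin (k' + 2) => fp.2 ⟨2 * i.val, by have := i.isLt; omega⟩))) ?_ ?_
      · intro fp hfp
        obtain ⟨hm, hn, hiff⟩ := (Set.Finite.mem_toFinset _).mp hfp
        refine CPPaux.mem_AFin.mpr (fun i j hr => ?_)
        have hPT : ∀ i : Fin (2 * (k' + 2)),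
            CPPaux.PTmap ((fun i : Fin (k' + 2) => fp.1 ⟨2 * i.val, by have := i.isLt; omega⟩),
              (fun i : Fin (k' + 2) => fp.2 ⟨2 * i.val, by have := i.isLt; omega⟩)) i
            = (fp.1 i, fp.2 i) := by
          intro i
          exact Prod.ext (hrec1 fp hm i).symm (hrec2 fp hn i).symm
        rw [hPT i, hPT j]
        exact (hiff i j).mpr hr
      · intro fp hfp fp' hfp' himg
        obtain ⟨hm, hn, _⟩ := (Set.Finite.mem_toFinset _).mp (Finset.mem_coe.mp hfp)
        obtain ⟨hm', hn', _⟩ := (Set.Finite.mem_toFinset _).mp (Finset.mem_coe.mp hfp')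
        refine Prod.ext ?_ ?_ <;> funext j
        · calc fp.1 j = fp.1 ⟨2 * (j.val / 2), by have := j.isLt; omega⟩ := hrec1 fp hm j
            _ = fp'.1 ⟨2 * (j.val / 2), by have := j.isLt; omega⟩ :=
                congrFun (congrArg Prod.fst himg) ⟨j.val / 2, by have := j.isLt; omega⟩
            _ = fp'.1 j := (hrec1 fp' hm' j).symm
        · calc fp.2 j = fp.2 ⟨2 * ((j.val + 1) / 2 % (k' + 2)),
              by have := Nat.mod_lt ((j.val + 1) / 2) (y := k' + 2) (by omega); omega⟩ :=
                hrec2 fp hn j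
            _ = fp'.2 ⟨2 * ((j.val + 1) / 2 % (k' + 2)), by
                  have := Nat.mod_lt ((j.val + 1) / 2) (y := k' + 2) (by omega); omega⟩ :=
                congrFun (congrArg Prod.snd himg)
                  ⟨(j.val + 1) / 2 % (k' + 2), Nat.mod_lt _ (by omega)⟩
            _ = fp'.2 j := (hrec2 fp' hn' j).symm
    have hstep2 := CPPaux.core_bound k' (R n) B
      (fun P a' => by obtain ⟨a, q⟩ := P; exact hMP2 n a q a')
      (fun P q' => by obtain ⟨a, q⟩ := P; exact hMP2' n a q q')
      p pr hpr1 hpr2 hprI c1 c2 c3 c4 hv12 hv23 hv34 hpp hqq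
    simp only [Fintype.card_fin] at hstep2
    have hstep3 : {x : (Fin (s n) × Fin (t n)) × (Fin (s n) × Fin (t n)) |
        (R n).r x.1 x.2}.ncard ≤ s n * supM n := by
      have hq := CPPaux.quad_bound (R n)
      rwa [Fintype.card_fin] at hq
    calc ({fp : (Fin (2 * (k' + 2)) → Fin (s n)) × (Fin (2 * (k' + 2)) → Fin (t n)) |
        (∀ i j, (mSetoid (k' + 2)).r i j → fp.1 i = fp.1 j) ∧
        (∀ i j, (nSetoid (k' + 2)).r i j → fp.2 i = fp.2 j) ∧
        (∀ i j, ((R n).r (fp.1 i, fp.2 i) (fp.1 j, fp.2 j) ↔ p.r i j))}.ncard)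
        ≤ (CPPaux.AFin (k' + 2) (R n) p).card := hstep1
      _ ≤ (B + 1) ^ (2 * (k' + 2)) * (s n + t n) ^ k' *
          {x : (Fin (s n) × Fin (t n)) × (Fin (s n) × Fin (t n)) | (R n).r x.1 x.2}.ncard :=
          hstep2
      _ ≤ (B + 1) ^ (2 * (k' + 2)) * (s n + t n) ^ k' * (s n * supM n) :=
          Nat.mul_le_mul (le_refl _) hstep3
  -- the asymptotic estimate
  refine squeeze_zero (g := fun n =>
      (((B + 1) ^ (2 * (k' + 2)) * (s n + t n) ^ k' * (s n * supM n) : ℕ) : ℝ) /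
        (n : ℝ) ^ (k' + 2 + 1)) (fun n => ?_) (fun n => ?_) ?_
  · positivity
  · rcases Nat.eq_zero_or_pos n with rfl | hn
    · simp
    · have hnp : (0 : ℝ) < (n : ℝ) ^ (k' + 2 + 1) := by positivity
      rw [div_le_div_iff_of_pos_right hnp]
      exact_mod_cast key n
  · have hlim : Tendsto (fun n => ((B + 1 : ℝ)) ^ (2 * (k' + 2)) *
        ((s n : ℝ) / n + (t n : ℝ) / n) ^ k' * ((s n : ℝ) / n) *
        ((supM n : ℝ) / (n : ℝ) ^ 2)) atTop (nhds 0) := by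
      have h1 : Tendsto (fun n => ((B + 1 : ℝ)) ^ (2 * (k' + 2)) *
          ((s n : ℝ) / n + (t n : ℝ) / n) ^ k' * ((s n : ℝ) / n)) atTop
          (nhds (((B + 1 : ℝ)) ^ (2 * (k' + 2)) * (κ + μ) ^ k' * κ)) :=
        (tendsto_const_nhds.mul ((hs.add ht).pow k')).mul hs
      have h2 := h1.mul hMP1
      simpa using h2
    refine Tendsto.congr' ?_ hlim
    filter_upwards [eventually_ge_atTop 1] with n hn
    have hn0 : (n : ℝ) ≠ 0 := by
      have : (1 : ℝ) ≤ (n : ℝ) := by exact_mod_cast hn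
      linarith
    push_cast
    rw [← add_div, div_pow]
    field_simp
    ring
end
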